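/- arXiv:1804.07087 — 3 statements merged into one kernel-verified Lean document; each statement's English description precedes it below -/
import Mathlib

section
/- The statistics maxdes and mindes are equidistributed on the set of all ordered set partitions of [n]: for each j, the number of ordered set partitions π of [n] with maxdes(π) = j equals the number with mindes(π) = j. Moreover, the reverse-complement map is a bijection witnessing this equidistribution and it preserves the number of blocks. -/
/-- The word of an ordered set partition: concatenate the blocks,
listing the elements of each block in increasing order. -/
def word (π : List (Finset ℕ)) : List ℕ :=
  (π.map (fun B => Finset.sort B (· ≤ ·))).flatten

/-- `π` is an ordered set partition of `[n] = {1,…,n}`: a list of nonempty,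
pairwise disjoint finsets whose union is `{1,…,n}`. -/
def IsOSP (n : ℕ) (π : List (Finset ℕ)) : Prop :=
  (∀ B ∈ π, B.Nonempty) ∧ π.Pairwise Disjoint ∧
    π.foldr (· ∪ ·) ∅ = Finset.Icc 1 n

noncomputable def minB (B : Finset ℕ) : ℕ := sInf (B : Set ℕ)
def maxB (B : Finset ℕ) : ℕ := B.sup id

/-- number of descents of a word -/
def desCount (w : List ℕ) : ℕ :=
  ((List.range (w.length - 1)).filter (fun i => w.getD (i + 1) 0 < w.getD i 0)).length

noncomputable def mindes (π : List (Finset ℕ)) : ℕ :=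
  ((List.range (π.length - 1)).filter
    (fun i => minB (π.getD (i + 1) ∅) < minB (π.getD i ∅))).length

def maxdes (π : List (Finset ℕ)) : ℕ :=
  ((List.range (π.length - 1)).filter
    (fun i => maxB (π.getD (i + 1) ∅) < maxB (π.getD i ∅))).length

noncomputable def pdes (π : List (Finset ℕ)) : ℕ :=
  ((List.range (π.length - 1)).filter
    (fun i => maxB (π.getD (i + 1) ∅) < minB (π.getD i ∅))).length

def Avoids12 (w : List ℕ) : Prop :=
  ¬ ∃ i j : ℕ, i < j ∧ j < w.length ∧ w.getD i 0 < w.getD j 0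

def Avoids21 (w : List ℕ) : Prop :=
  ¬ ∃ i j : ℕ, i < j ∧ j < w.length ∧ w.getD j 0 < w.getD i 0

def Avoids123 (w : List ℕ) : Prop :=
  ¬ ∃ i j k : ℕ, i < j ∧ j < k ∧ k < w.length ∧
    w.getD i 0 < w.getD j 0 ∧ w.getD j 0 < w.getD k 0

def Avoids132 (w : List ℕ) : Prop :=
  ¬ ∃ i j k : ℕ, i < j ∧ j < k ∧ k < w.length ∧
    w.getD i 0 < w.getD k 0 ∧ w.getD k 0 < w.getD j 0

def Avoids213 (w : List ℕ) : Prop :=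
  ¬ ∃ i j k : ℕ, i < j ∧ j < k ∧ k < w.length ∧
    w.getD j 0 < w.getD i 0 ∧ w.getD i 0 < w.getD k 0

def Avoids312 (w : List ℕ) : Prop :=
  ¬ ∃ i j k : ℕ, i < j ∧ j < k ∧ k < w.length ∧
    w.getD j 0 < w.getD k 0 ∧ w.getD k 0 < w.getD i 0

def Avoids321 (w : List ℕ) : Prop :=
  ¬ ∃ i j k : ℕ, i < j ∧ j < k ∧ k < w.length ∧
    w.getD k 0 < w.getD j 0 ∧ w.getD j 0 < w.getD i 0

/-- reverse-complement of an ordered set partition of `[n]` -/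
def rcomp (n : ℕ) (π : List (Finset ℕ)) : List (Finset ℕ) :=
  (π.map (fun B => B.image (fun a => n + 1 - a))).reverse

-- auxiliary lemmas
lemma aux_foldr_subset {B : Finset ℕ} {π : List (Finset ℕ)} (h : B ∈ π) :
    B ⊆ π.foldr (· ∪ ·) ∅ := by
  induction π with
  | nil => simp at h
  | cons a l ih =>
    rcases List.mem_cons.mp h with h | h
    · subst h; exact Finset.subset_union_left
    · exact (ih h).trans Finset.subset_union_right

lemma aux_block_subset {n : ℕ} {π : List (Finset ℕ)} (h : IsOSP n π) {B : Finset ℕ}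
    (hB : B ∈ π) : B ⊆ Finset.Icc 1 n := by
  rw [← h.2.2]; exact aux_foldr_subset hB

lemma minB_mem {B : Finset ℕ} (h : B.Nonempty) : minB B ∈ B := by
  have := Nat.sInf_mem (s := (B : Set ℕ)) (Finset.coe_nonempty.mpr h)
  simpa [minB] using this

lemma minB_le {B : Finset ℕ} {a : ℕ} (h : a ∈ B) : minB B ≤ a :=
  Nat.sInf_le (by simpa using h)

lemma maxB_mem {B : Finset ℕ} (h : B.Nonempty) : maxB B ∈ B := by
  obtain ⟨b, hb, hb'⟩ := Finset.exists_mem_eq_sup B h id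
  rw [maxB, hb']; exact hb

lemma le_maxB {B : Finset ℕ} {a : ℕ} (h : a ∈ B) : a ≤ maxB B :=
  Finset.le_sup (f := id) h

lemma maxB_image {n : ℕ} {B : Finset ℕ} (hne : B.Nonempty) (hsub : B ⊆ Finset.Icc 1 n) :
    maxB (B.image (fun a => n + 1 - a)) = n + 1 - minB B := by
  apply le_antisymm
  · rw [maxB, Finset.sup_image]
    apply Finset.sup_le
    intro a ha
    exact Nat.sub_le_sub_left (minB_le ha) _
  · exact le_maxB (Finset.mem_image_of_mem _ (minB_mem hne))

lemma minB_image {n : ℕ} {B : Finset ℕ} (hne : B.Nonempty) (hsub : B ⊆ Finset.Icc 1 n) :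
    minB (B.image (fun a => n + 1 - a)) = n + 1 - maxB B := by
  apply le_antisymm
  · exact minB_le (Finset.mem_image_of_mem _ (maxB_mem hne))
  · apply le_csInf (by simpa using (hne.image (fun a => n + 1 - a)))
    rintro x hx
    simp only [Finset.coe_image, Set.mem_image, Finset.mem_coe] at hx
    obtain ⟨a, ha, rfl⟩ := hx
    exact Nat.sub_le_sub_left (le_maxB ha) _

lemma minB_bounds {n : ℕ} {B : Finset ℕ} (hne : B.Nonempty) (hsub : B ⊆ Finset.Icc 1 n) :
    1 ≤ minB B ∧ minB B ≤ n := by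
  have := hsub (minB_mem hne); simp [Finset.mem_Icc] at this; exact this

lemma maxB_bounds {n : ℕ} {B : Finset ℕ} (hne : B.Nonempty) (hsub : B ⊆ Finset.Icc 1 n) :
    1 ≤ maxB B ∧ maxB B ≤ n := by
  have := hsub (maxB_mem hne); simp [Finset.mem_Icc] at this; exact this

lemma rcomp_length (n : ℕ) (π : List (Finset ℕ)) : (rcomp n π).length = π.length := by
  simp [rcomp]

lemma rcomp_getD {n : ℕ} {π : List (Finset ℕ)} {i : ℕ} (hi : i < π.length) :
    (rcomp n π).getD i ∅ = (π.getD (π.length - 1 - i) ∅).image (fun a => n + 1 - a) := by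
  have h1 : i < (rcomp n π).length := by rw [rcomp_length]; omega
  rw [List.getD_eq_getElem _ _ h1, List.getD_eq_getElem _ _ (by omega)]
  simp only [rcomp, List.getElem_reverse, List.getElem_map, List.length_map,
    List.length_reverse]

lemma aux_foldr_image (f : ℕ → ℕ) (π : List (Finset ℕ)) :
    (π.map (fun B => B.image f)).foldr (· ∪ ·) ∅ = (π.foldr (· ∪ ·) ∅).image f := by
  induction π with
  | nil => simp
  | cons a l ih => simp [ih, Finset.image_union]

lemma aux_foldr_reverse (π : List (Finset ℕ)) :
    π.reverse.foldr (· ∪ ·) (∅ : Finset ℕ) = π.foldr (· ∪ ·) ∅ := by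
  induction π with
  | nil => simp
  | cons a l ih =>
    simp only [List.reverse_cons, List.foldr_append, List.foldr_cons, List.foldr_nil]
    rw [← ih]
    induction l.reverse with
    | nil => simp
    | cons b m ih2 =>
      simp only [List.foldr_cons] at ih2 ⊢
      rw [ih2]
      ac_rfl

lemma image_flip_Icc (n : ℕ) :
    (Finset.Icc 1 n).image (fun a => n + 1 - a) = Finset.Icc 1 n := by
  ext x
  simp only [Finset.mem_image, Finset.mem_Icc]
  constructor
  · rintro ⟨a, ⟨h1, h2⟩, rfl⟩; omega
  · rintro ⟨h1, h2⟩; exact ⟨n + 1 - x, by omega, by omega⟩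

lemma rcomp_isOSP {n : ℕ} {π : List (Finset ℕ)} (h : IsOSP n π) : IsOSP n (rcomp n π) := by
  obtain ⟨hne, hdisj, hun⟩ := h
  refine ⟨?_, ?_, ?_⟩
  · intro B hB
    simp only [rcomp, List.mem_reverse, List.mem_map] at hB
    obtain ⟨A, hA, rfl⟩ := hB
    exact (hne A hA).image _
  · rw [rcomp, List.pairwise_reverse, List.pairwise_map]
    refine hdisj.imp_of_mem ?_
    intro A B hA hB hAB
    have hAs := aux_block_subset ⟨hne, hdisj, hun⟩ hA
    have hBs := aux_block_subset ⟨hne, hdisj, hun⟩ hB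
    rw [Finset.disjoint_left]
    rintro x hx hx'
    simp only [Finset.mem_image] at hx hx'
    obtain ⟨a, ha, rfl⟩ := hx'
    obtain ⟨b, hb, hba⟩ := hx
    have ha' := hAs ha; have hb' := hBs hb
    simp [Finset.mem_Icc] at ha' hb'
    have : a = b := by omega
    subst this
    exact (Finset.disjoint_left.mp hAB ha) hb
  · rw [rcomp, aux_foldr_reverse, aux_foldr_image, hun, image_flip_Icc]

lemma rcomp_rcomp {n : ℕ} {π : List (Finset ℕ)} (h : IsOSP n π) : rcomp n (rcomp n π) = π := by
  rw [rcomp, rcomp, List.map_reverse, List.reverse_reverse, List.map_map]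
  conv_rhs => rw [← List.map_id π]
  apply List.map_congr_left
  intro B hB
  have hBs := aux_block_subset h hB
  simp only [Function.comp, Finset.image_image, id]
  conv_rhs => rw [← Finset.image_id (s := B)]
  apply Finset.image_congr
  intro a ha
  have := hBs ha
  simp [Finset.mem_Icc] at this
  simp [Function.comp]; omega

lemma filter_range_len (m : ℕ) (p : ℕ → Prop) [DecidablePred p] :
    ((List.range m).filter (fun i => p i)).length = ((Finset.range m).filter p).card := rfl

lemma maxdes_rcomp {n : ℕ} {π : List (Finset ℕ)} (h : IsOSP n π) :
    maxdes (rcomp n π) = mindes π := by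
  classical
  rw [maxdes, mindes, rcomp_length]
  set k := π.length with hk
  rw [filter_range_len, filter_range_len]
  apply Finset.card_bij' (fun i _ => k - 2 - i) (fun i _ => k - 2 - i)
  · intro i hi
    simp only [Finset.mem_filter, Finset.mem_range] at hi ⊢
    obtain ⟨hik, hcond⟩ := hi
    have h1 : i + 1 < k := by omega
    have h2 : i < k := by omega
    rw [rcomp_getD (n := n) h1, rcomp_getD (n := n) h2] at hcond
    have e1 : k - 1 - (i + 1) = k - 2 - i := by omega
    have e2 : k - 1 - i = (k - 2 - i) + 1 := by omega
    rw [e1, e2] at hcond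
    have hm1 : (k - 2 - i) < k := by omega
    have hm2 : (k - 2 - i) + 1 < k := by omega
    have hne1 := h.1 _ (List.getD_eq_getElem (d := (∅:Finset ℕ)) _ hm1 ▸ List.getElem_mem _)
    have hne2 := h.1 _ (List.getD_eq_getElem (d := (∅:Finset ℕ)) _ hm2 ▸ List.getElem_mem _)
    have hs1 := aux_block_subset h (List.getD_eq_getElem (d := (∅:Finset ℕ)) _ hm1 ▸ List.getElem_mem _)
    have hs2 := aux_block_subset h (List.getD_eq_getElem (d := (∅:Finset ℕ)) _ hm2 ▸ List.getElem_mem _)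
    rw [maxB_image hne1 hs1, maxB_image hne2 hs2] at hcond
    have b1 := minB_bounds hne1 hs1
    have b2 := minB_bounds hne2 hs2
    constructor
    · omega
    · omega
  · intro i hi
    simp only [Finset.mem_filter, Finset.mem_range] at hi ⊢
    obtain ⟨hik, hcond⟩ := hi
    have hk2 : 2 ≤ k := by omega
    refine ⟨by omega, ?_⟩
    have h1 : (k - 2 - i) + 1 < k := by omega
    have h2 : (k - 2 - i) < k := by omega
    rw [rcomp_getD (n := n) h1, rcomp_getD (n := n) h2]
    have e1 : k - 1 - ((k - 2 - i) + 1) = i := by omega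
    have e2 : k - 1 - (k - 2 - i) = i + 1 := by omega
    rw [e1, e2]
    have hm1 : i < k := by omega
    have hm2 : i + 1 < k := by omega
    have hne1 := h.1 _ (List.getD_eq_getElem (d := (∅:Finset ℕ)) _ hm1 ▸ List.getElem_mem _)
    have hne2 := h.1 _ (List.getD_eq_getElem (d := (∅:Finset ℕ)) _ hm2 ▸ List.getElem_mem _)
    have hs1 := aux_block_subset h (List.getD_eq_getElem (d := (∅:Finset ℕ)) _ hm1 ▸ List.getElem_mem _)
    have hs2 := aux_block_subset h (List.getD_eq_getElem (d := (∅:Finset ℕ)) _ hm2 ▸ List.getElem_mem _)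
    rw [maxB_image hne1 hs1, maxB_image hne2 hs2]
    have b1 := minB_bounds hne1 hs1
    have b2 := minB_bounds hne2 hs2
    omega
  · intro i hi
    simp only [Finset.mem_filter, Finset.mem_range] at hi
    omega
  · intro i hi
    simp only [Finset.mem_filter, Finset.mem_range] at hi
    omega

lemma mindes_rcomp {n : ℕ} {π : List (Finset ℕ)} (h : IsOSP n π) :
    mindes (rcomp n π) = maxdes π := by
  classical
  rw [maxdes, mindes, rcomp_length]
  set k := π.length with hk
  rw [filter_range_len, filter_range_len]
  apply Finset.card_bij' (fun i _ => k - 2 - i) (fun i _ => k - 2 - i)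
  · intro i hi
    simp only [Finset.mem_filter, Finset.mem_range] at hi ⊢
    obtain ⟨hik, hcond⟩ := hi
    have h1 : i + 1 < k := by omega
    have h2 : i < k := by omega
    rw [rcomp_getD (n := n) h1, rcomp_getD (n := n) h2] at hcond
    have e1 : k - 1 - (i + 1) = k - 2 - i := by omega
    have e2 : k - 1 - i = (k - 2 - i) + 1 := by omega
    rw [e1, e2] at hcond
    have hm1 : (k - 2 - i) < k := by omega
    have hm2 : (k - 2 - i) + 1 < k := by omega
    have hne1 := h.1 _ (List.getD_eq_getElem (d := (∅:Finset ℕ)) _ hm1 ▸ List.getElem_mem _)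
    have hne2 := h.1 _ (List.getD_eq_getElem (d := (∅:Finset ℕ)) _ hm2 ▸ List.getElem_mem _)
    have hs1 := aux_block_subset h (List.getD_eq_getElem (d := (∅:Finset ℕ)) _ hm1 ▸ List.getElem_mem _)
    have hs2 := aux_block_subset h (List.getD_eq_getElem (d := (∅:Finset ℕ)) _ hm2 ▸ List.getElem_mem _)
    rw [minB_image hne1 hs1, minB_image hne2 hs2] at hcond
    have b1 := maxB_bounds hne1 hs1
    have b2 := maxB_bounds hne2 hs2
    exact ⟨by omega, by omega⟩
  · intro i hi
    simp only [Finset.mem_filter, Finset.mem_range] at hi ⊢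
    obtain ⟨hik, hcond⟩ := hi
    refine ⟨by omega, ?_⟩
    have h1 : (k - 2 - i) + 1 < k := by omega
    have h2 : (k - 2 - i) < k := by omega
    rw [rcomp_getD (n := n) h1, rcomp_getD (n := n) h2]
    have e1 : k - 1 - ((k - 2 - i) + 1) = i := by omega
    have e2 : k - 1 - (k - 2 - i) = i + 1 := by omega
    rw [e1, e2]
    have hm1 : i < k := by omega
    have hm2 : i + 1 < k := by omega
    have hne1 := h.1 _ (List.getD_eq_getElem (d := (∅:Finset ℕ)) _ hm1 ▸ List.getElem_mem _)
    have hne2 := h.1 _ (List.getD_eq_getElem (d := (∅:Finset ℕ)) _ hm2 ▸ List.getElem_mem _)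
    have hs1 := aux_block_subset h (List.getD_eq_getElem (d := (∅:Finset ℕ)) _ hm1 ▸ List.getElem_mem _)
    have hs2 := aux_block_subset h (List.getD_eq_getElem (d := (∅:Finset ℕ)) _ hm2 ▸ List.getElem_mem _)
    rw [minB_image hne1 hs1, minB_image hne2 hs2]
    have b1 := maxB_bounds hne1 hs1
    have b2 := maxB_bounds hne2 hs2
    omega
  · intro i hi
    simp only [Finset.mem_filter, Finset.mem_range] at hi
    omega
  · intro i hi
    simp only [Finset.mem_filter, Finset.mem_range] at hi
    omega

lemma bijon_rcomp (n j : ℕ) : Set.BijOn (rcomp n) {π | IsOSP n π ∧ mindes π = j}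
    {π | IsOSP n π ∧ maxdes π = j} := by
  refine ⟨?_, ?_, ?_⟩
  · rintro π ⟨h1, h2⟩
    exact ⟨rcomp_isOSP h1, by rw [maxdes_rcomp h1, h2]⟩
  · rintro π ⟨h1, _⟩ τ ⟨h2, _⟩ heq
    rw [← rcomp_rcomp h1, ← rcomp_rcomp h2, heq]
  · rintro τ ⟨h1, h2⟩
    exact ⟨rcomp n τ, ⟨rcomp_isOSP h1, by rw [mindes_rcomp h1, h2]⟩, rcomp_rcomp h1⟩

theorem stmt3 (n : ℕ) :
    (∀ j : ℕ, Nat.card {π : List (Finset ℕ) // IsOSP n π ∧ maxdes π = j} =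
        Nat.card {π : List (Finset ℕ) // IsOSP n π ∧ mindes π = j}) ∧
    (∀ j : ℕ, Set.BijOn (rcomp n) {π | IsOSP n π ∧ mindes π = j}
        {π | IsOSP n π ∧ maxdes π = j}) ∧
    (∀ π : List (Finset ℕ), IsOSP n π → (rcomp n π).length = π.length) := by
  refine ⟨?_, fun j => bijon_rcomp n j, fun π _ => rcomp_length n π⟩
  intro j
  exact Nat.card_congr ((bijon_rcomp n j).equiv _).symm
end

section
/- For any positive integers b_1,...,b_k and any index i, the number of ordered set partitions of [b_1+...+b_k] with block-size composition (b_1,...,b_i,b_{i+1},...,b_k) that word-avoid 123 equals the number with block-size composition (b_1,...,b_{i+1},b_i,...,b_k) that word-avoid 123; i.e., exchanging two adjacent block sizes does not change the count. -/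
section Helpers
open List

/-- an increasing triple occurring as a sublist -/
def Inc3 (w : List ℕ) : Prop := ∃ a b c : ℕ, a < b ∧ b < c ∧ [a, b, c] <+ w

lemma sublist_getD {l' w : List ℕ} (h : l' <+ w) :
    ∃ g : ℕ → ℕ, StrictMono g ∧ ∀ m < l'.length, g m < w.length ∧ w.getD (g m) 0 = l'.getD m 0 := by
  induction h with
  | slnil => exact ⟨id, strictMono_id, by simp⟩
  | cons a h ih =>
      obtain ⟨g, hg, hm⟩ := ih
      refine ⟨fun m => g m + 1, fun p q hpq => by simpa using hg hpq, fun m hm' => ?_⟩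
      obtain ⟨h1, h2⟩ := hm m hm'
      refine ⟨by simpa using h1, ?_⟩
      simpa using h2
  | @cons_cons l₁ l₂ a h ih =>
      obtain ⟨g, hg, hm⟩ := ih
      refine ⟨fun m => match m with | 0 => 0 | m + 1 => g m + 1, ?_, ?_⟩
      · intro p q hpq
        match p, q with
        | 0, 0 => omega
        | 0, q + 1 => exact Nat.succ_pos _
        | p + 1, q + 1 => simpa using hg (by omega : p < q)
        | p + 1, 0 => omega
      · intro m hm'
        match m with
        | 0 => simp
        | m + 1 =>
            obtain ⟨h1, h2⟩ := hm m (by simp at hm'; omega)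
            refine ⟨by simp; omega, ?_⟩
            rw [List.getD_cons_succ, List.getD_cons_succ]
            exact h2

lemma avoids123_iff_not_inc3 {w : List ℕ} : Avoids123 w ↔ ¬ Inc3 w := by
  constructor
  · intro h
    rintro ⟨a, b, c, hab, hbc, hsub⟩
    obtain ⟨g, hg, hm⟩ := sublist_getD hsub
    have h0 := hm 0 (by norm_num)
    have h1 := hm 1 (by norm_num)
    have h2 := hm 2 (by norm_num)
    have e0 : ([a, b, c] : List ℕ).getD 0 0 = a := rfl
    have e1 : ([a, b, c] : List ℕ).getD 1 0 = b := rfl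
    have e2 : ([a, b, c] : List ℕ).getD 2 0 = c := rfl
    rw [e0] at h0; rw [e1] at h1; rw [e2] at h2
    exact h ⟨g 0, g 1, g 2, hg (by norm_num), hg (by norm_num), h2.1, by
      rw [h0.2, h1.2]; exact hab, by rw [h1.2, h2.2]; exact hbc⟩
  · intro h
    rintro ⟨i, j, k, hij, hjk, hk, hv1, hv2⟩
    have hj : j < w.length := hjk.trans hk
    have hi : i < w.length := hij.trans hj
    rw [List.getD_eq_getElem _ _ hi, List.getD_eq_getElem _ _ hj] at hv1
    rw [List.getD_eq_getElem _ _ hj, List.getD_eq_getElem _ _ hk] at hv2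
    apply h
    refine ⟨w[i], w[j], w[k], hv1, hv2, ?_⟩
    have hp : List.Pairwise (· < ·) [(⟨i, hi⟩ : Fin w.length), ⟨j, hj⟩, ⟨k, hk⟩] := by
      refine List.Pairwise.cons ?_ (List.Pairwise.cons ?_ (List.pairwise_singleton _ _))
      · intro x hx
        simp only [List.mem_cons, List.mem_singleton, List.not_mem_nil, or_false] at hx
        rcases hx with rfl | rfl
        · exact Fin.mk_lt_mk.mpr hij
        · exact Fin.mk_lt_mk.mpr (hij.trans hjk)
      · intro x hx
        simp only [List.mem_singleton] at hx
        subst hx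
        exact Fin.mk_lt_mk.mpr hjk
    have := List.map_getElem_sublist (l := w) hp
    simpa using this

lemma mid_sublist (l m r : List ℕ) : m <+ l ++ (m ++ r) :=
  (List.sublist_append_left m r).trans (List.sublist_append_right l _)

lemma pair_sublist_triple {a b x y z : ℕ} (h : [a, b] <+ [x, y, z]) :
    (a = x ∧ b = y) ∨ (a = x ∧ b = z) ∨ (a = y ∧ b = z) := by
  cases h with
  | cons _ h' =>
      have := h'.eq_of_length (by simp)
      injection this with e1 e2; injection e2 with e2 _
      exact Or.inr (Or.inr ⟨e1, e2⟩)
  | cons_cons _ h' =>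
      cases h' with
      | cons _ h'' =>
          have : b = z := by simpa using h''
          exact Or.inr (Or.inl ⟨rfl, this⟩)
      | cons_cons _ h'' => exact Or.inl ⟨rfl, by simpa using h''.subset (by simp)⟩

lemma master {l r m m' : List ℕ}
    (h1 : ∀ p ∈ m', p ∈ m)
    (h2 : ∀ p q : ℕ, p < q → [p, q] <+ m' →
      ∃ p' q', p' < q' ∧ p ≤ p' ∧ q' ≤ q ∧ [p', q'] <+ m)
    (h3 : ∀ a b c : ℕ, a < b → b < c → ¬ [a, b, c] <+ m')
    (hav : ¬ Inc3 (l ++ (m ++ r))) : ¬ Inc3 (l ++ (m' ++ r)) := by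
  rintro ⟨a, b, c, hab, hbc, hsub⟩
  rw [List.sublist_append_iff] at hsub
  obtain ⟨u, vw, huvw, hu, hvw⟩ := hsub
  rw [List.sublist_append_iff] at hvw
  obtain ⟨v, w', rfl, hv, hw⟩ := hvw
  apply hav
  rcases v with _ | ⟨p, _ | ⟨q, _ | ⟨t, v⟩⟩⟩
  · refine ⟨a, b, c, hab, hbc, ?_⟩
    rw [huvw]
    simp only [List.nil_append]
    exact hu.append (hw.trans (List.sublist_append_right m r))
  · refine ⟨a, b, c, hab, hbc, ?_⟩
    rw [huvw]
    exact hu.append ((List.singleton_sublist.mpr (h1 p (hv.subset (by simp)))).append hw)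
  · rcases u with _ | ⟨a', _ | ⟨a'', u⟩⟩
    · obtain ⟨e1, e2, hw'⟩ : p = a ∧ q = b ∧ w' = [c] := by
        simpa using huvw.symm
      obtain ⟨p', q', h1', h2', h3', h4'⟩ := h2 p q (by rw [e1, e2]; exact hab) hv
      refine ⟨p', q', c, h1', ?_, ?_⟩
      · rw [e2] at h3'
        exact lt_of_le_of_lt h3' hbc
      · exact (List.nil_sublist l).append (h4'.append (hw' ▸ hw))
    · obtain ⟨e0, e1, e2, hw'⟩ : a' = a ∧ p = b ∧ q = c ∧ w' = [] := by
        simpa using huvw.symm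
      obtain ⟨p', q', h1', h2', h3', h4'⟩ := h2 p q (by rw [e1, e2]; exact hbc) hv
      refine ⟨a', p', q', ?_, h1', ?_⟩
      · have hap : a < p := by rw [e1]; exact hab
        rw [e0]
        exact lt_of_lt_of_le hap h2'
      · exact hu.append (h4'.append (List.nil_sublist r))
    · exfalso
      have h' := congrArg List.length huvw
      simp at h'
      omega
  · have h' := congrArg List.length huvw
    simp at h'
    obtain ⟨hu0, hw0⟩ : u = [] ∧ w' = [] := by
      constructor <;> [skip; skip] <;> apply List.eq_nil_of_length_eq_zero <;> omega
    subst hu0; subst hw0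
    rcases v with _ | ⟨s, v⟩
    · obtain ⟨e1, e2, e3⟩ : p = a ∧ q = b ∧ t = c := by simpa using huvw.symm
      exact absurd hv (h3 p q t (by rw [e1, e2]; exact hab) (by rw [e2, e3]; exact hbc))
    · simp at h'
lemma sub_xy (x y z : ℕ) : [x, y] <+ [x, y, z] := List.sublist_append_left [x, y] [z]
lemma sub_xz (x y z : ℕ) : [x, z] <+ [x, y, z] :=
  ((List.Sublist.refl [z]).cons y).cons₂ x
lemma sub_yz (x y z : ℕ) : [y, z] <+ [x, y, z] := (List.Sublist.refl [y, z]).cons x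

lemma fwd_avoid1 {l r : List ℕ} {x y z : ℕ} (hzx : z < x) (hxy : x < y)
    (h : ¬ Inc3 (l ++ ([x, y, z] ++ r))) : ¬ Inc3 (l ++ ([x, z, y] ++ r)) := by
  refine master (by intro p hp; simp at hp ⊢; tauto) ?_ ?_ h
  · intro p q hpq hsub
    rcases pair_sublist_triple hsub with ⟨e1, e2⟩ | ⟨e1, e2⟩ | ⟨e1, e2⟩
    · exact absurd hpq (by omega)
    · exact ⟨x, y, hxy, by omega, by omega, sub_xy x y z⟩
    · exact ⟨x, y, hxy, by omega, by omega, sub_xy x y z⟩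
  · intro a b c hab hbc hsub
    have := hsub.eq_of_length (by simp)
    injection this with e1 this; injection this with e2 this; injection this with e3 _
    omega

lemma fwd_avoid2 {l r : List ℕ} {x y z : ℕ} (hxz : x < z) (hzy : z < y)
    (h : ¬ Inc3 (l ++ ([x, y, z] ++ r))) : ¬ Inc3 (l ++ ([y, x, z] ++ r)) := by
  refine master (by intro p hp; simp at hp ⊢; tauto) ?_ ?_ h
  · intro p q hpq hsub
    rcases pair_sublist_triple hsub with ⟨e1, e2⟩ | ⟨e1, e2⟩ | ⟨e1, e2⟩
    · exact absurd hpq (by omega)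
    · exact absurd hpq (by omega)
    · exact ⟨x, z, hxz, by omega, by omega, sub_xz x y z⟩
  · intro a b c hab hbc hsub
    have := hsub.eq_of_length (by simp)
    injection this with e1 this; injection this with e2 this; injection this with e3 _
    omega

lemma bwd_avoid1 {l r : List ℕ} {s u v : ℕ} (hus : u < s) (hsv : s < v)
    (h : ¬ Inc3 (l ++ ([s, u, v] ++ r))) : ¬ Inc3 (l ++ ([s, v, u] ++ r)) := by
  refine master (by intro p hp; simp at hp ⊢; tauto) ?_ ?_ h
  · intro p q hpq hsub
    rcases pair_sublist_triple hsub with ⟨e1, e2⟩ | ⟨e1, e2⟩ | ⟨e1, e2⟩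
    · exact ⟨s, v, hsv, by omega, by omega, sub_xz s u v⟩
    · exact absurd hpq (by omega)
    · exact absurd hpq (by omega)
  · intro a b c hab hbc hsub
    have := hsub.eq_of_length (by simp)
    injection this with e1 this; injection this with e2 this; injection this with e3 _
    omega

lemma bwd_avoid2 {l r : List ℕ} {s u v : ℕ} (huv : u < v) (hvs : v < s)
    (h : ¬ Inc3 (l ++ ([s, u, v] ++ r))) : ¬ Inc3 (l ++ ([u, s, v] ++ r)) := by
  refine master (by intro p hp; simp at hp ⊢; tauto) ?_ ?_ h
  · intro p q hpq hsub
    rcases pair_sublist_triple hsub with ⟨e1, e2⟩ | ⟨e1, e2⟩ | ⟨e1, e2⟩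
    · exact ⟨u, v, huv, by omega, by omega, sub_yz s u v⟩
    · exact ⟨u, v, huv, by omega, by omega, sub_yz s u v⟩
    · exact absurd hpq (by omega)
  · intro a b c hab hbc hsub
    have := hsub.eq_of_length (by simp)
    injection this with e1 this; injection this with e2 this; injection this with e3 _
    omega

/- list structural helpers -/

lemma getD_append_len {α : Type*} (A : List α) (x : α) (t : List α) (d : α) :
    (A ++ x :: t).getD A.length d = x := by
  induction A with
  | nil => rfl
  | cons a A ih => simpa using ih

lemma set_append_len {α : Type*} (A : List α) (x v : α) (t : List α) :
    (A ++ x :: t).set A.length v = A ++ v :: t := by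
  induction A with
  | nil => rfl
  | cons a A ih => simp [ih]

lemma decomp {α : Type*} : ∀ (i : ℕ) (l : List α), i + 1 < l.length →
    ∃ T P S D, l = T ++ P :: S :: D ∧ T.length = i
  | 0, [], h => by simp at h
  | 0, [_], h => by simp at h
  | 0, a :: b :: t, _ => ⟨[], a, b, t, rfl, rfl⟩
  | (i+1), [], h => by simp at h
  | (i+1), a :: l, h => by
      obtain ⟨T, P, S, D, hl, hT⟩ := decomp i l (by simp at h; omega)
      exact ⟨a :: T, P, S, D, by simp [hl], by simp [hT]⟩

/- finset helpers -/

lemma minB_eq {B : Finset ℕ} {a : ℕ} (ha : a ∈ B) (h : ∀ c ∈ B, a ≤ c) : minB B = a := by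
  unfold minB
  refine le_antisymm (Nat.sInf_le (by simpa using ha)) (h _ ?_)
  have := Nat.sInf_mem (s := (B : Set ℕ)) ⟨a, by simpa using ha⟩
  simpa using this

lemma maxB_eq {B : Finset ℕ} {a : ℕ} (ha : a ∈ B) (h : ∀ c ∈ B, c ≤ a) : maxB B = a := by
  unfold maxB
  exact le_antisymm (Finset.sup_le h) (Finset.le_sup (f := id) ha)

lemma minB_singleton (a : ℕ) : minB {a} = a := minB_eq (by simp) (by simp)
lemma maxB_singleton (a : ℕ) : maxB {a} = a := maxB_eq (by simp) (by simp)

lemma minB_pair {a b : ℕ} (h : a < b) : minB {a, b} = a :=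
  minB_eq (by simp) (by intro c hc; simp at hc; omega)
lemma maxB_pair {a b : ℕ} (h : a < b) : maxB {a, b} = b :=
  maxB_eq (by simp) (by intro c hc; simp at hc; omega)

lemma sort_pair {a b : ℕ} (h : a < b) :
    Finset.sort ({a, b} : Finset ℕ) (· ≤ ·) = [a, b] := by
  rw [show ({a, b} : Finset ℕ) = insert a {b} from rfl,
    Finset.sort_insert (r := (· ≤ ·)) (by intro c hc; simp at hc; omega) (by simp; omega),
    Finset.sort_singleton]

lemma card_two_ordered {P : Finset ℕ} (h : P.card = 2) : ∃ x y, x < y ∧ P = {x, y} := by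
  obtain ⟨a, b, hne, rfl⟩ := Finset.card_eq_two.mp h
  rcases hne.lt_or_gt with h' | h'
  · exact ⟨a, b, h', rfl⟩
  · exact ⟨b, a, h', Finset.pair_comm a b⟩

/- word helpers -/

lemma word_append (π₁ π₂ : List (Finset ℕ)) : word (π₁ ++ π₂) = word π₁ ++ word π₂ := by
  simp [word]

lemma word_cons (B : Finset ℕ) (π : List (Finset ℕ)) :
    word (B :: π) = Finset.sort B (· ≤ ·) ++ word π := by
  simp [word]

/- pairwise / foldr helpers -/

lemma pairwise_mid {T D : List (Finset ℕ)} {P S A B : Finset ℕ}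
    (hA : A ⊆ P ∪ S) (hB : B ⊆ P ∪ S) (hAB : Disjoint A B)
    (h : (T ++ P :: S :: D).Pairwise (_root_.Disjoint : Finset ℕ → Finset ℕ → Prop)) : (T ++ A :: B :: D).Pairwise (_root_.Disjoint : Finset ℕ → Finset ℕ → Prop) := by
  rw [List.pairwise_append] at h ⊢
  obtain ⟨h1, h2, h3⟩ := h
  rw [List.pairwise_cons] at h2
  obtain ⟨h21, h22⟩ := h2
  rw [List.pairwise_cons] at h22
  obtain ⟨h221, h222⟩ := h22
  have hPD : ∀ d ∈ D, Disjoint P d := fun d hd => h21 d (by simp [hd])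
  have hSD : ∀ d ∈ D, Disjoint S d := fun d hd => h221 d hd
  have hPS : Disjoint P S := h21 S (by simp)
  have hkey : ∀ X : Finset ℕ, X ⊆ P ∪ S → ∀ d ∈ D, Disjoint X d := by
    intro X hX d hd
    exact Finset.disjoint_of_subset_left hX
      (Finset.disjoint_union_left.mpr ⟨hPD d hd, hSD d hd⟩)
  refine ⟨h1, ?_, ?_⟩
  · rw [List.pairwise_cons]
    refine ⟨?_, ?_⟩
    · intro b hb
      rcases List.mem_cons.mp hb with rfl | hb'
      · exact hAB
      · exact hkey A hA b hb'
    · rw [List.pairwise_cons]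
      exact ⟨fun d hd => hkey B hB d hd, h222⟩
  · intro a ha b hb
    have haP : Disjoint a (P ∪ S) := by
      have h1' := h3 a ha P (by simp)
      have h2' := h3 a ha S (by simp)
      exact Finset.disjoint_union_right.mpr ⟨h1', h2'⟩
    rcases List.mem_cons.mp hb with rfl | hb'
    · exact Finset.disjoint_of_subset_right hA haP
    rcases List.mem_cons.mp hb' with rfl | hb''
    · exact Finset.disjoint_of_subset_right hB haP
    · exact h3 a ha b (by simp [hb''])

lemma foldr_mid {T D : List (Finset ℕ)} {P S A B : Finset ℕ}
    (hU : A ∪ B = P ∪ S) :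
    (T ++ A :: B :: D).foldr (· ∪ ·) ∅ = (T ++ P :: S :: D).foldr (· ∪ ·) ∅ := by
  rw [List.foldr_append, List.foldr_append]
  congr 1
  show A ∪ (B ∪ D.foldr (· ∪ ·) ∅) = P ∪ (S ∪ D.foldr (· ∪ ·) ∅)
  rw [← Finset.union_assoc, ← Finset.union_assoc, hU]
lemma getD_two₁ {α : Type*} {T D : List α} {P S : α} {i : ℕ} (hT : T.length = i) (d : α) :
    (T ++ P :: S :: D).getD i d = P := by
  subst hT; exact getD_append_len T P (S :: D) d

lemma getD_two₂ {α : Type*} {T D : List α} {P S : α} {i : ℕ} (hT : T.length = i) (d : α) :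
    (T ++ P :: S :: D).getD (i + 1) d = S := by
  subst hT
  have h1 : T ++ P :: S :: D = (T ++ [P]) ++ S :: D := by simp
  have h2 : T.length + 1 = (T ++ [P]).length := by simp
  rw [h1, h2]
  exact getD_append_len (T ++ [P]) S D d

lemma set_two {α : Type*} {T D : List α} {P S : α} (A B : α) {i : ℕ} (hT : T.length = i) :
    ((T ++ P :: S :: D).set i A).set (i + 1) B = T ++ A :: B :: D := by
  subst hT
  rw [set_append_len]
  have h1 : T ++ A :: S :: D = (T ++ [A]) ++ S :: D := by simp
  have h2 : T.length + 1 = (T ++ [A]).length := by simp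
  rw [h1, h2, set_append_len]
  simp

noncomputable def Phi (i : ℕ) (π : List (Finset ℕ)) : List (Finset ℕ) :=
  if minB (π.getD (i + 1) ∅) < minB (π.getD i ∅) then
    (π.set i {minB (π.getD i ∅)}).set (i + 1)
      (insert (minB (π.getD (i + 1) ∅)) {maxB (π.getD i ∅)})
  else
    (π.set i {maxB (π.getD i ∅)}).set (i + 1)
      (insert (minB (π.getD i ∅)) {minB (π.getD (i + 1) ∅)})

noncomputable def Psi (i : ℕ) (π : List (Finset ℕ)) : List (Finset ℕ) :=
  if minB (π.getD i ∅) < maxB (π.getD (i + 1) ∅) then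
    (π.set i (insert (minB (π.getD i ∅)) {maxB (π.getD (i + 1) ∅)})).set (i + 1)
      {minB (π.getD (i + 1) ∅)}
  else
    (π.set i (insert (minB (π.getD (i + 1) ∅)) {minB (π.getD i ∅)})).set (i + 1)
      {maxB (π.getD (i + 1) ∅)}

lemma fwd {n i : ℕ} {π : List (Finset ℕ)} {b : List ℕ}
    (hosp : IsOSP n π) (hcomp : π.map Finset.card = b) (hav : Avoids123 (word π))
    (hlen : i + 1 < b.length) (h2 : b.getD i 0 = 2) (h1 : b.getD (i + 1) 0 = 1) :
    IsOSP n (Phi i π) ∧ (Phi i π).map Finset.card = (b.set i 1).set (i + 1) 2 ∧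
      Avoids123 (word (Phi i π)) ∧ Psi i (Phi i π) = π := by
  have hπlen : i + 1 < π.length := by
    have : (π.map Finset.card).length = π.length := List.length_map _
    rw [hcomp] at this; omega
  obtain ⟨T, P, S, D, hdec, hT⟩ := decomp i π hπlen
  have hbT : b = T.map Finset.card ++ P.card :: S.card :: D.map Finset.card := by
    rw [← hcomp, hdec]; simp
  have hTm : (T.map Finset.card).length = i := by simp [hT]
  have hPc : P.card = 2 := by rw [hbT, getD_two₁ hTm] at h2; exact h2
  have hSc : S.card = 1 := by rw [hbT, getD_two₂ hTm] at h1; exact h1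
  obtain ⟨x, y, hxy, hPxy⟩ := card_two_ordered hPc
  obtain ⟨z, hSz⟩ := Finset.card_eq_one.mp hSc
  have hpair : (T ++ P :: S :: D).Pairwise (_root_.Disjoint : Finset ℕ → Finset ℕ → Prop) := by
    rw [← hdec]; exact hosp.2.1
  have hPS : _root_.Disjoint P S := by
    rw [List.pairwise_append] at hpair
    exact (List.pairwise_cons.mp hpair.2.1).1 S (by simp)
  have hzS : z ∈ S := by rw [hSz]; simp
  have hzP : z ∉ P := fun hz => (Finset.disjoint_left.mp hPS hz) hzS
  have hzx : z ≠ x := fun e => hzP (by rw [hPxy, e]; simp)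
  have hzy : z ≠ y := fun e => hzP (by rw [hPxy, e]; simp)
  have hw : word π = word T ++ ([x, y, z] ++ word D) := by
    rw [hdec, word_append, word_cons, word_cons, hPxy, hSz, sort_pair hxy,
      Finset.sort_singleton]
    simp
  have hav' : ¬ Inc3 (word T ++ ([x, y, z] ++ word D)) := by
    rw [← hw]; exact avoids123_iff_not_inc3.mp hav
  have hgP : π.getD i ∅ = P := by rw [hdec]; exact getD_two₁ hT ∅
  have hgS : π.getD (i + 1) ∅ = S := by rw [hdec]; exact getD_two₂ hT ∅
  have hminP : minB P = x := by rw [hPxy]; exact minB_pair hxy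
  have hmaxP : maxB P = y := by rw [hPxy]; exact maxB_pair hxy
  have hminS : minB S = z := by rw [hSz]; exact minB_singleton z
  have hbset : (b.set i 1).set (i + 1) 2 =
      T.map Finset.card ++ 1 :: 2 :: D.map Finset.card := by
    rw [hbT]; exact set_two 1 2 hTm
  rcases lt_or_gt_of_ne hzx with hzx' | hxz'
  · -- z < x
    have hzy' : z < y := hzx'.trans hxy
    have hΦ : Phi i π = T ++ {x} :: insert z {y} :: D := by
      unfold Phi
      rw [hgP, hgS, hminP, hmaxP, hminS, if_pos hzx', hdec, set_two]
      exact hT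
    have hwΦ : word (Phi i π) = word T ++ ([x, z, y] ++ word D) := by
      rw [hΦ, word_append, word_cons, word_cons, Finset.sort_singleton,
        show (insert z {y} : Finset ℕ) = {z, y} from rfl, sort_pair hzy']
      simp
    refine ⟨⟨?_, ?_, ?_⟩, ?_, ?_, ?_⟩
    · intro B hB
      rw [hΦ] at hB
      rcases List.mem_append.mp hB with hB | hB
      · exact hosp.1 B (by rw [hdec]; exact List.mem_append.mpr (Or.inl hB))
      · rcases List.mem_cons.mp hB with rfl | hB
        · exact ⟨x, by simp⟩
        rcases List.mem_cons.mp hB with rfl | hB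
        · exact ⟨z, by simp⟩
        · exact hosp.1 B (by rw [hdec]; simp [hB])
    · rw [hΦ]
      refine pairwise_mid ?_ ?_ ?_ hpair
      · intro c hc; simp at hc; subst hc; simp [hPxy]
      · intro c hc; simp at hc
        rcases hc with rfl | rfl
        · simp [hSz]
        · simp [hPxy]
      · rw [Finset.disjoint_left]
        intro c hc; simp at hc; subst hc; simp; omega
    · rw [hΦ, foldr_mid (P := P) (S := S) (by rw [hPxy, hSz]; ext c; simp; try tauto), ← hdec]
      exact hosp.2.2
    · rw [hΦ, hbset]
      simp [Finset.card_insert_of_notMem, hzy]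
    · rw [avoids123_iff_not_inc3, hwΦ]
      exact fwd_avoid1 hzx' hxy hav'
    · rw [hΦ]
      unfold Psi
      rw [getD_two₁ hT, getD_two₂ hT, minB_singleton,
        show maxB (insert z {y}) = y from maxB_pair hzy',
        show minB (insert z {y}) = z from minB_pair hzy',
        if_pos hxy, set_two _ _ hT, hdec, hPxy, hSz]
  · -- x < z
    have hzy' : z < y := by
      rcases lt_or_gt_of_ne hzy with h | h
      · exact h
      · exact absurd ⟨x, y, z, hxy, h, mid_sublist _ _ _⟩ hav'
    have hΦ : Phi i π = T ++ {y} :: insert x {z} :: D := by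
      unfold Phi
      rw [hgP, hgS, hminP, hmaxP, hminS, if_neg (by omega), hdec, set_two]
      exact hT
    have hwΦ : word (Phi i π) = word T ++ ([y, x, z] ++ word D) := by
      rw [hΦ, word_append, word_cons, word_cons, Finset.sort_singleton,
        show (insert x {z} : Finset ℕ) = {x, z} from rfl, sort_pair hxz']
      simp
    refine ⟨⟨?_, ?_, ?_⟩, ?_, ?_, ?_⟩
    · intro B hB
      rw [hΦ] at hB
      rcases List.mem_append.mp hB with hB | hB
      · exact hosp.1 B (by rw [hdec]; exact List.mem_append.mpr (Or.inl hB))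
      · rcases List.mem_cons.mp hB with rfl | hB
        · exact ⟨y, by simp⟩
        rcases List.mem_cons.mp hB with rfl | hB
        · exact ⟨x, by simp⟩
        · exact hosp.1 B (by rw [hdec]; simp [hB])
    · rw [hΦ]
      refine pairwise_mid ?_ ?_ ?_ hpair
      · intro c hc; simp at hc; subst hc; simp [hPxy]
      · intro c hc; simp at hc
        rcases hc with rfl | rfl
        · simp [hPxy]
        · simp [hSz]
      · rw [Finset.disjoint_left]
        intro c hc; simp at hc; subst hc; simp; omega
    · rw [hΦ, foldr_mid (P := P) (S := S) (by rw [hPxy, hSz]; ext c; simp; try tauto), ← hdec]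
      exact hosp.2.2
    · rw [hΦ, hbset]
      have : x ≠ z := fun e => hzx e.symm
      simp [Finset.card_insert_of_notMem, this]
    · rw [avoids123_iff_not_inc3, hwΦ]
      exact fwd_avoid2 hxz' hzy' hav'
    · rw [hΦ]
      unfold Psi
      rw [getD_two₁ hT, getD_two₂ hT, minB_singleton,
        show maxB (insert x {z}) = z from maxB_pair hxz',
        show minB (insert x {z}) = x from minB_pair hxz',
        if_neg (by omega), set_two _ _ hT, hdec, hPxy, hSz]
lemma bwd {n i : ℕ} {π : List (Finset ℕ)} {c : List ℕ}
    (hosp : IsOSP n π) (hcomp : π.map Finset.card = c) (hav : Avoids123 (word π))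
    (hlen : i + 1 < c.length) (h1 : c.getD i 0 = 1) (h2 : c.getD (i + 1) 0 = 2) :
    IsOSP n (Psi i π) ∧ (Psi i π).map Finset.card = (c.set i 2).set (i + 1) 1 ∧
      Avoids123 (word (Psi i π)) ∧ Phi i (Psi i π) = π := by
  have hπlen : i + 1 < π.length := by
    have : (π.map Finset.card).length = π.length := List.length_map _
    rw [hcomp] at this; omega
  obtain ⟨T, S₀, P₀, D, hdec, hT⟩ := decomp i π hπlen
  have hbT : c = T.map Finset.card ++ S₀.card :: P₀.card :: D.map Finset.card := by
    rw [← hcomp, hdec]; simp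
  have hTm : (T.map Finset.card).length = i := by simp [hT]
  have hSc : S₀.card = 1 := by rw [hbT, getD_two₁ hTm] at h1; exact h1
  have hPc : P₀.card = 2 := by rw [hbT, getD_two₂ hTm] at h2; exact h2
  obtain ⟨u, v, huv, hPuv⟩ := card_two_ordered hPc
  obtain ⟨s, hSs⟩ := Finset.card_eq_one.mp hSc
  have hpair : (T ++ S₀ :: P₀ :: D).Pairwise (_root_.Disjoint : Finset ℕ → Finset ℕ → Prop) := by
    rw [← hdec]; exact hosp.2.1
  have hSP : _root_.Disjoint S₀ P₀ := by
    rw [List.pairwise_append] at hpair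
    exact (List.pairwise_cons.mp hpair.2.1).1 P₀ (by simp)
  have hsS : s ∈ S₀ := by rw [hSs]; simp
  have hsP : s ∉ P₀ := fun hs => (Finset.disjoint_right.mp hSP hs) hsS
  have hsu : s ≠ u := fun e => hsP (by rw [hPuv, e]; simp)
  have hsv : s ≠ v := fun e => hsP (by rw [hPuv, e]; simp)
  have hw : word π = word T ++ ([s, u, v] ++ word D) := by
    rw [hdec, word_append, word_cons, word_cons, hPuv, hSs, sort_pair huv,
      Finset.sort_singleton]
    simp
  have hav' : ¬ Inc3 (word T ++ ([s, u, v] ++ word D)) := by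
    rw [← hw]; exact avoids123_iff_not_inc3.mp hav
  have hgS : π.getD i ∅ = S₀ := by rw [hdec]; exact getD_two₁ hT ∅
  have hgP : π.getD (i + 1) ∅ = P₀ := by rw [hdec]; exact getD_two₂ hT ∅
  have hminP : minB P₀ = u := by rw [hPuv]; exact minB_pair huv
  have hmaxP : maxB P₀ = v := by rw [hPuv]; exact maxB_pair huv
  have hminS : minB S₀ = s := by rw [hSs]; exact minB_singleton s
  have hbset : (c.set i 2).set (i + 1) 1 =
      T.map Finset.card ++ 2 :: 1 :: D.map Finset.card := by
    rw [hbT]; exact set_two 2 1 hTm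
  rcases lt_or_gt_of_ne hsv with hsv' | hvs'
  · -- s < v
    have hus : u < s := by
      rcases lt_or_gt_of_ne hsu with h | h
      · exact absurd ⟨s, u, v, h, huv, mid_sublist _ _ _⟩ hav'
      · exact h
    have hΨ : Psi i π = T ++ insert s {v} :: {u} :: D := by
      unfold Psi
      rw [hgP, hgS, hminP, hmaxP, hminS, if_pos hsv', hdec, set_two]
      exact hT
    have hwΨ : word (Psi i π) = word T ++ ([s, v, u] ++ word D) := by
      rw [hΨ, word_append, word_cons, word_cons, Finset.sort_singleton,
        show (insert s {v} : Finset ℕ) = {s, v} from rfl, sort_pair hsv']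
      simp
    refine ⟨⟨?_, ?_, ?_⟩, ?_, ?_, ?_⟩
    · intro B hB
      rw [hΨ] at hB
      rcases List.mem_append.mp hB with hB | hB
      · exact hosp.1 B (by rw [hdec]; exact List.mem_append.mpr (Or.inl hB))
      · rcases List.mem_cons.mp hB with rfl | hB
        · exact ⟨s, by simp⟩
        rcases List.mem_cons.mp hB with rfl | hB
        · exact ⟨u, by simp⟩
        · exact hosp.1 B (by rw [hdec]; simp [hB])
    · rw [hΨ]
      refine pairwise_mid ?_ ?_ ?_ hpair
      · intro a ha; simp at ha
        rcases ha with rfl | rfl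
        · simp [hSs]
        · simp [hPuv]
      · intro a ha; simp at ha; subst ha; simp [hPuv]
      · rw [Finset.disjoint_left]
        intro a ha; simp at ha
        rcases ha with rfl | rfl <;> simp <;> omega
    · rw [hΨ, foldr_mid (P := S₀) (S := P₀) (by rw [hPuv, hSs]; ext a; simp; try tauto), ← hdec]
      exact hosp.2.2
    · rw [hΨ, hbset]
      simp [Finset.card_insert_of_notMem, hsv]
    · rw [avoids123_iff_not_inc3, hwΨ]
      exact bwd_avoid1 hus hsv' hav'
    · rw [hΨ]
      unfold Phi
      rw [getD_two₁ hT, getD_two₂ hT, minB_singleton,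
        show minB (insert s {v}) = s from minB_pair hsv',
        show maxB (insert s {v}) = v from maxB_pair hsv',
        if_pos hus, set_two _ _ hT, hdec, hPuv, hSs]
  · -- v < s
    have hus : u < s := huv.trans hvs'
    have hΨ : Psi i π = T ++ insert u {s} :: {v} :: D := by
      unfold Psi
      rw [hgP, hgS, hminP, hmaxP, hminS, if_neg (by omega), hdec, set_two]
      exact hT
    have hwΨ : word (Psi i π) = word T ++ ([u, s, v] ++ word D) := by
      rw [hΨ, word_append, word_cons, word_cons, Finset.sort_singleton,
        show (insert u {s} : Finset ℕ) = {u, s} from rfl, sort_pair hus]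
      simp
    refine ⟨⟨?_, ?_, ?_⟩, ?_, ?_, ?_⟩
    · intro B hB
      rw [hΨ] at hB
      rcases List.mem_append.mp hB with hB | hB
      · exact hosp.1 B (by rw [hdec]; exact List.mem_append.mpr (Or.inl hB))
      · rcases List.mem_cons.mp hB with rfl | hB
        · exact ⟨u, by simp⟩
        rcases List.mem_cons.mp hB with rfl | hB
        · exact ⟨v, by simp⟩
        · exact hosp.1 B (by rw [hdec]; simp [hB])
    · rw [hΨ]
      refine pairwise_mid ?_ ?_ ?_ hpair
      · intro a ha; simp at ha
        rcases ha with rfl | rfl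
        · simp [hPuv]
        · simp [hSs]
      · intro a ha; simp at ha; subst ha; simp [hPuv]
      · rw [Finset.disjoint_left]
        intro a ha; simp at ha
        rcases ha with rfl | rfl <;> simp <;> omega
    · rw [hΨ, foldr_mid (P := S₀) (S := P₀) (by rw [hPuv, hSs]; ext a; simp; try tauto), ← hdec]
      exact hosp.2.2
    · rw [hΨ, hbset]
      have : u ≠ s := fun e => hsu e.symm
      simp [Finset.card_insert_of_notMem, this]
    · rw [avoids123_iff_not_inc3, hwΨ]
      exact bwd_avoid2 huv hvs' hav'
    · rw [hΨ]
      unfold Phi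
      rw [getD_two₁ hT, getD_two₂ hT, minB_singleton,
        show minB (insert u {s}) = u from minB_pair hus,
        show maxB (insert u {s}) = s from maxB_pair hus,
        if_neg (by omega), set_two _ _ hT, hdec, hPuv, hSs]
lemma set_getD_self {l : List ℕ} {i : ℕ} (h : i < l.length) : l.set i (l.getD i 0) = l := by
  rw [List.getD_eq_getElem _ _ h]
  apply List.ext_getElem (by simp)
  intro k h1 h2
  rw [List.getElem_set]
  split
  · next heq => subst heq; rfl
  · rfl

lemma set_set_two {α : Type*} (l : List α) {i j : ℕ} (hij : j ≠ i) (p q p' q' : α) :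
    (((l.set i p).set j q).set i p').set j q' = (l.set i p').set j q' := by
  rw [List.set_comm q p' hij, List.set_set, List.set_set]

lemma getD_sets₁ {l : List ℕ} {i j : ℕ} (hij : j ≠ i) (hi : i < l.length) (p q : ℕ) :
    ((l.set i p).set j q).getD i 0 = p := by
  rw [List.getD_eq_getElem _ _ (by simpa using hi), List.getElem_set_ne hij,
    List.getElem_set_self]

lemma getD_sets₂ {l : List ℕ} {i j : ℕ} (hj : j < l.length) (p q : ℕ) :
    ((l.set i p).set j q).getD j 0 = q := by
  rw [List.getD_eq_getElem _ _ (by simpa using hj), List.getElem_set_self]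

lemma key (n : ℕ) (b : List ℕ) (i : ℕ) (hlen : i + 1 < b.length)
    (h2 : b.getD i 0 = 2) (h1 : b.getD (i + 1) 0 = 1) :
    Nat.card {π : List (Finset ℕ) // IsOSP n π ∧ π.map Finset.card = b ∧
      Avoids123 (word π)} =
    Nat.card {π : List (Finset ℕ) // IsOSP n π ∧
      π.map Finset.card = (b.set i 1).set (i + 1) 2 ∧ Avoids123 (word π)} := by
  have hclen : i + 1 < ((b.set i 1).set (i + 1) 2).length := by simpa using hlen
  have hc1 : ((b.set i 1).set (i + 1) 2).getD i 0 = 1 :=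
    getD_sets₁ (l := b) (by omega) (by omega) 1 2
  have hc2 : ((b.set i 1).set (i + 1) 2).getD (i + 1) 0 = 2 :=
    getD_sets₂ (l := b) (by omega) 1 2
  have hcb : (((b.set i 1).set (i + 1) 2).set i 2).set (i + 1) 1 = b := by
    have e1 := set_getD_self (l := b) (i := i) (by omega)
    rw [h2] at e1
    have e2 := set_getD_self (l := b) (i := i + 1) (by omega)
    rw [h1] at e2
    rw [set_set_two _ (by omega) 1 2 2 1, e1, e2]
  apply Nat.card_congr
  refine ⟨fun p => ⟨Phi i p.1, ?_⟩, fun q => ⟨Psi i q.1, ?_⟩, ?_, ?_⟩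
  · obtain ⟨h1', h2', h3'⟩ := p.2
    obtain ⟨a1, a2, a3, _⟩ := fwd h1' h2' h3' hlen h2 h1
    exact ⟨a1, a2, a3⟩
  · obtain ⟨h1', h2', h3'⟩ := q.2
    obtain ⟨a1, a2, a3, _⟩ := bwd h1' h2' h3' hclen hc1 hc2
    exact ⟨a1, by rw [a2, hcb], a3⟩
  · intro p
    apply Subtype.ext
    obtain ⟨h1', h2', h3'⟩ := p.2
    exact (fwd h1' h2' h3' hlen h2 h1).2.2.2
  · intro q
    apply Subtype.ext
    obtain ⟨h1', h2', h3'⟩ := q.2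
    exact (bwd h1' h2' h3' hclen hc1 hc2).2.2.2

lemma empty_of_big {n : ℕ} {b : List ℕ} {j : ℕ} (hj : j < b.length)
    (h3 : 3 ≤ b.getD j 0) :
    IsEmpty {π : List (Finset ℕ) // IsOSP n π ∧ π.map Finset.card = b ∧
      Avoids123 (word π)} := by
  constructor
  rintro ⟨π, hosp, hcomp, hav⟩
  have hπlen : j < π.length := by
    have := congrArg List.length hcomp; simp at this; omega
  have hBmem : π[j] ∈ π := List.getElem_mem _
  have hBcard : 3 ≤ (π[j]'hπlen).card := by
    have e : (π.map Finset.card).getD j 0 = (π[j]'hπlen).card := by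
      rw [List.getD_eq_getElem _ _ (by simpa using hπlen), List.getElem_map]
    rw [hcomp] at e; omega
  have hslen : 3 ≤ (Finset.sort (π[j]'hπlen) (· ≤ ·)).length := by
    rw [Finset.length_sort]; exact hBcard
  set s := Finset.sort (π[j]'hπlen) (· ≤ ·) with hs
  have hsorted : List.Pairwise (· < ·) s := (Finset.sortedLT_sort _).pairwise
  have h01 : s[0]'(by omega) < s[1]'(by omega) :=
    (List.pairwise_iff_getElem.mp hsorted) 0 1 (by omega) (by omega) (by omega)
  have h12 : s[1]'(by omega) < s[2]'(by omega) :=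
    (List.pairwise_iff_getElem.mp hsorted) 1 2 (by omega) (by omega) (by omega)
  have hp : List.Pairwise (· < ·)
      [(⟨0, by omega⟩ : Fin s.length), ⟨1, by omega⟩, ⟨2, by omega⟩] := by
    refine List.Pairwise.cons ?_ (List.Pairwise.cons ?_ (List.pairwise_singleton _ _))
    · intro x hx
      simp only [List.mem_cons, List.mem_singleton, List.not_mem_nil, or_false] at hx
      rcases hx with rfl | rfl
      · exact Fin.mk_lt_mk.mpr (by omega)
      · exact Fin.mk_lt_mk.mpr (by omega)
    · intro x hx
      simp only [List.mem_singleton] at hx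
      subst hx
      exact Fin.mk_lt_mk.mpr (by omega)
  have hsub3 : [s[0]'(by omega), s[1]'(by omega), s[2]'(by omega)] <+ s := by
    have := List.map_getElem_sublist (l := s) hp
    simpa using this
  have hsw : s <+ word π := by
    apply List.sublist_flatten_of_mem
    rw [hs]
    exact List.mem_map_of_mem (f := fun B => Finset.sort B (· ≤ ·)) hBmem
  exact (avoids123_iff_not_inc3.mp hav)
    ⟨_, _, _, h01, h12, hsub3.trans hsw⟩

end Helpers
theorem stmt14 (b : List ℕ) (hb : ∀ x ∈ b, 1 ≤ x) (i : ℕ)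
    (hi : i + 1 < b.length) :
    Nat.card {π : List (Finset ℕ) // IsOSP b.sum π ∧
        π.map Finset.card = b ∧ Avoids123 (word π)} =
    Nat.card {π : List (Finset ℕ) // IsOSP b.sum π ∧
        π.map Finset.card = (b.set i (b.getD (i + 1) 0)).set (i + 1) (b.getD i 0) ∧
        Avoids123 (word π)} := by
  have hvi : 1 ≤ b.getD i 0 := hb _ (by
    rw [List.getD_eq_getElem _ _ (by omega)]; exact List.getElem_mem _)
  have hvj : 1 ≤ b.getD (i + 1) 0 := hb _ (by
    rw [List.getD_eq_getElem _ _ (by omega)]; exact List.getElem_mem _)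
  by_cases hvv : b.getD i 0 = b.getD (i + 1) 0
  · have heq : (b.set i (b.getD (i + 1) 0)).set (i + 1) (b.getD i 0) = b := by
      have e1 := set_getD_self (l := b) (i := i) (by omega)
      rw [hvv] at e1
      have e2 := set_getD_self (l := b) (i := i + 1) (by omega)
      rw [← hvv] at e2
      rw [e1, e2]
    rw [heq]
  · by_cases h21 : b.getD i 0 = 2 ∧ b.getD (i + 1) 0 = 1
    · rw [h21.1, h21.2]
      exact key b.sum b i hi h21.1 h21.2
    · by_cases h12 : b.getD i 0 = 1 ∧ b.getD (i + 1) 0 = 2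
      · rw [h12.1, h12.2]
        have hclen : i + 1 < ((b.set i 2).set (i + 1) 1).length := by simpa using hi
        have hc2 : ((b.set i 2).set (i + 1) 1).getD i 0 = 2 :=
          getD_sets₁ (l := b) (by omega) (by omega) 2 1
        have hc1 : ((b.set i 2).set (i + 1) 1).getD (i + 1) 0 = 1 :=
          getD_sets₂ (l := b) (by omega) 2 1
        have hcb : (((b.set i 2).set (i + 1) 1).set i 1).set (i + 1) 2 = b := by
          have e1 := set_getD_self (l := b) (i := i) (by omega)
          rw [h12.1] at e1
          have e2 := set_getD_self (l := b) (i := i + 1) (by omega)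
          rw [h12.2] at e2
          rw [set_set_two _ (by omega) 2 1 1 2, e1, e2]
        have hk := key b.sum ((b.set i 2).set (i + 1) 1) i hclen hc2 hc1
        rw [hcb] at hk
        exact hk.symm
      · have hbig : 3 ≤ b.getD i 0 ∨ 3 ≤ b.getD (i + 1) 0 := by omega
        have hgd1 : ((b.set i (b.getD (i + 1) 0)).set (i + 1) (b.getD i 0)).getD i 0
            = b.getD (i + 1) 0 := getD_sets₁ (l := b) (by omega) (by omega) _ _
        have hgd2 : ((b.set i (b.getD (i + 1) 0)).set (i + 1) (b.getD i 0)).getD (i + 1) 0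
            = b.getD i 0 := getD_sets₂ (l := b) (by omega) _ _
        rcases hbig with h | h
        · haveI h1e := empty_of_big (n := b.sum) (j := i) (by omega : i < b.length) h
          haveI h2e := empty_of_big (n := b.sum)
            (b := (b.set i (b.getD (i + 1) 0)).set (i + 1) (b.getD i 0)) (j := i + 1)
            (by simpa using hi) (by rw [hgd2]; exact h)
          rw [Nat.card_of_isEmpty, Nat.card_of_isEmpty]
        · haveI h1e := empty_of_big (n := b.sum) (j := i + 1) (by omega) h
          haveI h2e := empty_of_big (n := b.sum)
            (b := (b.set i (b.getD (i + 1) 0)).set (i + 1) (b.getD i 0)) (j := i)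
            (by simp; omega) (by rw [hgd1]; exact h)
          rw [Nat.card_of_isEmpty, Nat.card_of_isEmpty]
end

section
/- For any composition (b_1,...,b_k) of n with each b_i ∈ {1,2}, the number of ordered set partitions of [n] with block sizes |B_i| = b_i (in order) that word-avoid 123 equals the k-th Catalan number C_k = C(2k,k)/(k+1). -/
namespace OSP15

open Finset

/-- ballot-number table -/
def g : ℕ → ℕ → ℕ
  | 0, 0 => 1
  | 0, _+1 => 0
  | _+1, 0 => 0
  | k+1, r+1 => ∑ j ∈ Finset.Icc r k, g k j

lemma g_zero_of_lt : ∀ k r, k < r → g k r = 0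
  | 0, _+1, _ => rfl
  | _+1, 0, h => by omega
  | k+1, r+1, h => by
      show (∑ j ∈ Finset.Icc r k, g k j) = 0
      rw [Finset.Icc_eq_empty (by omega), Finset.sum_empty]

lemma g_succ_zero (k : ℕ) : g (k+1) 0 = 0 := rfl

lemma g_split (m r : ℕ) : g (m+1) (r+1) = g m r + g (m+1) (r+2) := by
  show (∑ j ∈ Finset.Icc r m, g m j) = g m r + ∑ j ∈ Finset.Icc (r+1) m, g m j
  rcases le_or_gt r m with h | h
  · rw [← Finset.Ioc_insert_left h, Finset.sum_insert (by simp), Finset.Icc_add_one_left_eq_Ioc]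
  · have e1 : Finset.Icc r m = ∅ := Finset.Icc_eq_empty (by omega)
    have e2 : Finset.Icc (r+1) m = ∅ := Finset.Icc_eq_empty (by omega)
    rw [e1, e2]; simp [g_zero_of_lt _ _ h]

lemma gA (k : ℕ) (hB : ∀ j, j ≤ k → (∑ r ∈ Finset.range (j+1), g j r) = catalan j) :
    ∀ r, g (k+1) (r+1) = ∑ i ∈ Finset.range (k+1), catalan i * g (k-i) r := by
  induction k using Nat.strong_induction_on with
  | _ k ih =>
    -- downward induction on r
    suffices H : ∀ d r, k + 1 ≤ r + d → g (k+1) (r+1) = ∑ i ∈ Finset.range (k+1), catalan i * g (k-i) r by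
      exact fun r => H (k+1) r (by omega)
    intro d
    induction d with
    | zero =>
      intro r hr
      rw [g_zero_of_lt _ _ (by omega)]
      rw [Finset.sum_congr rfl (fun i hi => ?_), Finset.sum_const_zero]
      rw [g_zero_of_lt (k-i) r (by simp at hi; omega), mul_zero]
    | succ d hd =>
      intro r hr
      rcases Nat.lt_or_ge r (k+1) with hrk | hrk
      swap
      · -- r ≥ k+1 : both sides zero
        rw [g_zero_of_lt _ _ (by omega)]
        rw [Finset.sum_congr rfl (fun i hi => ?_), Finset.sum_const_zero]
        rw [g_zero_of_lt (k-i) r (by simp at hi; omega), mul_zero]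
      rcases r with _ | r
      · -- r = 0 : use hB
        have h1 : g (k+1) 1 = ∑ j ∈ Finset.range (k+1), g k j := by
          show (∑ j ∈ Finset.Icc 0 k, g k j) = _
          congr 1
          ext j; simp
        rw [h1, hB k le_rfl]
        rw [Finset.sum_eq_single k (fun i hi hne => by
            rcases Nat.exists_eq_add_of_lt (by simp at hi; omega : i < k) with ⟨c, hc⟩
            have : k - i = c + 1 := by omega
            rw [this, g_succ_zero, mul_zero])
          (fun h => absurd (Finset.self_mem_range_succ k) h)]
        rw [Nat.sub_self]
        show catalan k = catalan k * g 0 0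
        simp [g]
      · -- r = r+1
        rcases k with _ | k'
        · -- k = 0: r+1 < 1 impossible
          omega
        set k := k' + 1
        have LHS : g (k+1) (r+2) = g k (r+1) + g (k+1) (r+3) := g_split k (r+1)
        have IH2 : g (k+1) (r+3) = ∑ i ∈ Finset.range (k+1), catalan i * g (k-i) (r+2) :=
          hd (r+2) (by omega)
        have IHk : g k (r+1) = ∑ i ∈ Finset.range k, catalan i * g (k-1-i) r :=
          ih k' (by omega) (fun j hj => hB j (by omega)) r
        rw [LHS, IH2, IHk]
        -- RHS = ∑_{i<k} cat i * g (k-1-i) r + ∑_{i<k+1} cat i * g (k-i) (r+2)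
        have split : ∀ i ∈ Finset.range (k+1), catalan i * g (k-i) (r+1)
            = (if i < k then catalan i * g (k-1-i) r else 0)
              + catalan i * g (k-i) (r+2) := by
          intro i hi
          simp only [Finset.mem_range] at hi
          rcases Nat.lt_or_ge i k with h | h
          · have : k - i = (k-1-i) + 1 := by omega
            rw [if_pos h, this, g_split, Nat.mul_add]
          · have : i = k := by omega
            subst this
            rw [if_neg (by omega), Nat.sub_self]
            have h0 : g 0 (r+1) = 0 := rfl
            have h1 : g 0 (r+2) = 0 := rfl
            rw [h0, h1, zero_add]
        rw [Finset.sum_congr rfl split, Finset.sum_add_distrib]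
        congr 1
        rw [Finset.sum_ite, Finset.sum_const_zero, add_zero]
        congr 1
        ext i
        simp only [Finset.mem_filter, Finset.mem_range]
        omega

lemma gB : ∀ k, (∑ r ∈ Finset.range (k+1), g k r) = catalan k := by
  intro k
  induction k using Nat.strong_induction_on with
  | _ k ih =>
    rcases k with _ | k
    · simp [g, catalan]
    · have hB : ∀ j, j ≤ k → (∑ r ∈ Finset.range (j+1), g j r) = catalan j :=
        fun j hj => ih j (by omega)
      rw [Finset.sum_range_succ', g_succ_zero, add_zero]
      rw [Finset.sum_congr rfl (fun r _ => gA k hB r)]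
      rw [Finset.sum_comm]
      have inner : ∀ i ∈ Finset.range (k+1),
          (∑ r ∈ Finset.range (k+1), catalan i * g (k-i) r) = catalan i * catalan (k-i) := by
        intro i hi
        simp only [Finset.mem_range] at hi
        rw [← Finset.mul_sum]
        congr 1
        rw [← hB (k-i) (by omega)]
        refine (Finset.sum_subset (Finset.range_subset_range.2 (by omega)) ?_).symm
        intro x _ hx
        simp only [Finset.mem_range, not_lt] at hx
        exact g_zero_of_lt _ _ (by omega)
      rw [Finset.sum_congr rfl inner]
      rw [catalan_succ]
      rw [Fin.sum_univ_eq_sum_range (fun i => catalan i * catalan (k - i))]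

end OSP15

namespace OSP15

lemma card_filter_range (A c d : ℕ) :
    ((Finset.range A).filter (fun j => c ≤ d + j)).card = A - (c - d) := by
  have h : (Finset.range A).filter (fun j => c ≤ d + j) = Finset.Ico (c - d) A := by
    ext j; simp only [Finset.mem_filter, Finset.mem_range, Finset.mem_Ico]; omega
  rw [h, Nat.card_Ico]

lemma card_filter_range2 (M c d j : ℕ) (hj : j < M) :
    ((Finset.range M).filter (fun r => c ≤ r + d ∧ r ≤ j)).card = (j+1) - (c - d) := by
  have h : (Finset.range M).filter (fun r => c ≤ r + d ∧ r ≤ j) = Finset.Ico (c - d) (j+1) := by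
    ext r; simp only [Finset.mem_filter, Finset.mem_range, Finset.mem_Ico]; omega
  rw [h, Nat.card_Ico]

/-- the master recursion for refined counts -/
def F : List ℕ → ℕ → ℕ
  | [], _ => 1
  | c :: b, ρ => (∑ j ∈ Finset.range (min ρ (b.sum + c - 1)), F b j)
      + (if c = 1 then F b (min ρ (b.sum + c - 1)) else 0)

lemma len_le_sum : ∀ (b : List ℕ), (∀ x ∈ b, x = 1 ∨ x = 2) → b.length ≤ b.sum := by
  intro b
  induction b with
  | nil => simp
  | cons c b ih =>
    intro h
    have := h c (by simp)
    have := ih (fun x hx => h x (by simp [hx]))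
    simp only [List.length_cons, List.sum_cons]
    omega

lemma F_eq : ∀ (b : List ℕ), (∀ x ∈ b, x = 1 ∨ x = 2) → ∀ ρ,
    F b ρ = ∑ r ∈ Finset.range (b.length+1), if b.sum ≤ r + ρ then g b.length r else 0 := by
  intro b
  induction b with
  | nil => intro _ ρ; simp [F, g]
  | cons c b ih =>
    intro hb ρ
    have hc := hb c (by simp)
    have hbt : ∀ x ∈ b, x = 1 ∨ x = 2 := fun x hx => hb x (by simp [hx])
    have hks : b.length ≤ b.sum := len_le_sum b hbt
    set k := b.length with hk
    set s := b.sum with hs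
    -- RHS transformation
    have RHS : (∑ r ∈ Finset.range ((c :: b).length+1),
          if (c :: b).sum ≤ r + ρ then g ((c :: b).length) r else 0)
        = ∑ j ∈ Finset.range (k+1), ((j+1) - ((s+c) - (1+ρ))) * g k j := by
      rw [List.length_cons, List.sum_cons]
      rw [Finset.sum_range_succ']
      have h0 : (if c + s ≤ 0 + ρ then g (k+1) 0 else 0) = 0 := by
        rw [g_succ_zero]; simp
      rw [h0, add_zero]
      have hexp : ∀ r ∈ Finset.range (k+1),
          (if c + s ≤ (r+1) + ρ then g (k+1) (r+1) else 0)
          = ∑ j ∈ Finset.range (k+1),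
              (if (s + c ≤ r + (1+ρ) ∧ r ≤ j) then g k j else 0) := by
        intro r _
        have hg : g (k+1) (r+1) = ∑ j ∈ Finset.range (k+1), if r ≤ j then g k j else 0 := by
          show (∑ j ∈ Finset.Icc r k, g k j) = _
          rw [Finset.sum_ite, Finset.sum_const_zero, add_zero]
          congr 1
          ext j; simp only [Finset.mem_Icc, Finset.mem_filter, Finset.mem_range]; omega
        by_cases hcond : c + s ≤ (r+1) + ρ
        · rw [if_pos hcond, hg]
          refine Finset.sum_congr rfl (fun j _ => ?_)
          have hP : s + c ≤ r + (1+ρ) := by omega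
          by_cases h2 : r ≤ j <;> simp [h2, hP]
        · rw [if_neg hcond]
          symm
          refine Finset.sum_eq_zero (fun j _ => ?_)
          rw [if_neg (by omega)]
      rw [Finset.sum_congr rfl hexp, Finset.sum_comm]
      refine Finset.sum_congr rfl (fun j hj => ?_)
      simp only [Finset.mem_range] at hj
      rw [← Finset.sum_filter, Finset.sum_const, card_filter_range2 (k+1) (s+c) (1+ρ) j hj, smul_eq_mul]
    rw [RHS]
    -- LHS
    have sumpart : ∀ A : ℕ, (∑ j ∈ Finset.range A, F b j)
        = ∑ r ∈ Finset.range (k+1), (A - (s - r)) * g k r := by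
      intro A
      rw [Finset.sum_congr rfl (fun j _ => ih hbt j), Finset.sum_comm]
      refine Finset.sum_congr rfl (fun r _ => ?_)
      rw [← Finset.sum_filter, Finset.sum_const, smul_eq_mul]
      congr 1
      have : ((Finset.range A).filter (fun j => s ≤ j + r)).card = A - (s - r) := by
        have := card_filter_range A s r
        rw [← this]
        congr 1
        ext j; simp only [Finset.mem_filter, Finset.mem_range]; omega
      rw [← this]
      congr 1
      ext j; simp only [Finset.mem_filter, Finset.mem_range]; omega
    rcases hc with hc | hc
    · -- c = 1
      subst hc
      show (∑ j ∈ Finset.range (min ρ (s + 1 - 1)), F b j)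
          + (if 1 = 1 then F b (min ρ (s + 1 - 1)) else 0) = _
      rw [if_pos rfl]
      have hA : s + 1 - 1 = s := by omega
      rw [hA, sumpart (min ρ s), ih hbt (min ρ s), ← Finset.sum_add_distrib]
      refine Finset.sum_congr rfl (fun r hr => ?_)
      simp only [Finset.mem_range] at hr
      have hrs : r ≤ s := by omega
      by_cases hcond : s ≤ r + min ρ s
      · rw [if_pos hcond]
        have : (min ρ s - (s - r)) * g k r + g k r = (min ρ s - (s - r) + 1) * g k r := by ring
        rw [this]
        congr 1
        omega
      · rw [if_neg hcond, add_zero]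
        congr 1
        omega
    · -- c = 2
      subst hc
      show (∑ j ∈ Finset.range (min ρ (s + 2 - 1)), F b j)
          + (if 2 = 1 then F b (min ρ (s + 2 - 1)) else 0) = _
      rw [if_neg (by omega), add_zero]
      have hA : s + 2 - 1 = s + 1 := by omega
      rw [hA, sumpart (min ρ (s+1))]
      refine Finset.sum_congr rfl (fun r hr => ?_)
      simp only [Finset.mem_range] at hr
      congr 1
      omega

lemma F_sat (b : List ℕ) (hb : ∀ x ∈ b, x = 1 ∨ x = 2) : F b b.sum = catalan b.length := by
  rw [F_eq b hb, Finset.sum_congr rfl (fun r _ => if_pos (by omega)), gB]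

end OSP15



namespace OSP15

attribute [local instance 0] Classical.propDecidable

open List in
lemma dummy_sublist_notation : ([] : List ℕ) <+ [] := List.Sublist.refl _

open List

def OSPF (S : Finset ℕ) : List ℕ → Finset (List (Finset ℕ))
  | [] => if S = ∅ then {([] : List (Finset ℕ))} else ∅
  | c :: b => (S.powerset.filter fun B => B.card = c).biUnion
      fun B => (OSPF (S \ B) b).image (B :: ·)

def Avo (w : List ℕ) : Prop := ∀ a b c : ℕ, [a,b,c] <+ w → a < b → b < c → False

def BLT (w : List ℕ) (t : ℕ) : Prop := ∀ a b : ℕ, [a,b] <+ w → a < b → a < t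

noncomputable def cnt (S : Finset ℕ) (b : List ℕ) (t : ℕ) : ℕ :=
  ((OSPF S b).filter fun π => Avo (word π) ∧ BLT (word π) t).card

lemma word_nil : word [] = [] := rfl

lemma word_cons (B : Finset ℕ) (π : List (Finset ℕ)) :
    word (B :: π) = B.sort (· ≤ ·) ++ word π := rfl

lemma mem_OSPF_nil {S : Finset ℕ} {π : List (Finset ℕ)} :
    π ∈ OSPF S [] ↔ S = ∅ ∧ π = [] := by
  simp only [OSPF]
  split
  · simp_all
  · simp_all

lemma mem_OSPF_cons {S : Finset ℕ} {c : ℕ} {b : List ℕ} {π : List (Finset ℕ)} :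
    π ∈ OSPF S (c :: b) ↔ ∃ B, B ⊆ S ∧ B.card = c ∧ ∃ π', π' ∈ OSPF (S \ B) b ∧ B :: π' = π := by
  simp only [OSPF]
  simp [Finset.mem_biUnion, Finset.mem_filter, Finset.mem_powerset, Finset.mem_image,
    and_assoc]

lemma word_mem : ∀ (b : List ℕ) (S : Finset ℕ) (π : List (Finset ℕ)),
    S.card = b.sum → π ∈ OSPF S b → ∀ a, (a ∈ word π ↔ a ∈ S) := by
  intro b
  induction b with
  | nil =>
    intro S π _ hπ a
    rw [mem_OSPF_nil] at hπ
    obtain ⟨rfl, rfl⟩ := hπ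
    simp [word_nil]
  | cons c b ih =>
    intro S π hcard hπ a
    rw [mem_OSPF_cons] at hπ
    obtain ⟨B, hBS, hBc, π', hπ', rfl⟩ := hπ
    have hsd : (S \ B).card = b.sum := by
      rw [Finset.card_sdiff_of_subset hBS, hBc, hcard, List.sum_cons]
      omega
    rw [word_cons, List.mem_append, Finset.mem_sort, ih (S \ B) π' hsd hπ' a,
      Finset.mem_sdiff]
    constructor
    · rintro (h | ⟨h, _⟩)
      · exact hBS h
      · exact h
    · intro h
      by_cases hB : a ∈ B
      · exact Or.inl hB
      · exact Or.inr ⟨h, hB⟩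

lemma avo_cons {v : ℕ} {w : List ℕ} :
    Avo (v :: w) ↔ Avo w ∧ ∀ c d : ℕ, [c,d] <+ w → v < c → c < d → False := by
  constructor
  · intro h
    refine ⟨fun a b c hs => h a b c (hs.cons v), fun c d hs => h v c d (hs.cons₂ v)⟩
  · rintro ⟨h1, h2⟩ a b c hs hab hbc
    rw [List.sublist_cons_iff] at hs
    rcases hs with hs | ⟨r, hr, hrs⟩
    · exact h1 a b c hs hab hbc
    · cases hr
      exact h2 b c hrs hab hbc

lemma blt_cons {v t : ℕ} {w : List ℕ} :
    BLT (v :: w) t ↔ BLT w t ∧ ∀ d ∈ w, v < d → v < t := by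
  constructor
  · intro h
    refine ⟨fun a b hs => h a b (hs.cons v), fun d hd hvd =>
      h v d ((List.singleton_sublist.2 hd).cons₂ v) hvd⟩
  · rintro ⟨h1, h2⟩ a b hs hab
    rw [List.sublist_cons_iff] at hs
    rcases hs with hs | ⟨r, hr, hrs⟩
    · exact h1 a b hs hab
    · cases hr
      exact h2 b (List.singleton_sublist.1 hrs) hab

lemma char1 {v t : ℕ} {w : List ℕ} (hv : v ∉ w) :
    (Avo (v :: w) ∧ BLT (v :: w) t) ↔
      (Avo w ∧ BLT w (min t v) ∧ ((∃ d ∈ w, v < d) → v < t)) := by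
  rw [avo_cons, blt_cons]
  constructor
  · rintro ⟨⟨h1, h2⟩, h3, h4⟩
    refine ⟨h1, ?_, ?_⟩
    · intro a b hs hab
      have hat : a < t := h3 a b hs hab
      have hav : a < v := by
        have h5 : ¬ v < a := fun hva => h2 a b hs hva hab
        have haw : a ∈ w := hs.subset (by simp)
        have h6 : a ≠ v := fun h => hv (h ▸ haw)
        omega
      exact lt_min hat hav
    · rintro ⟨d, hd, hvd⟩
      exact h4 d hd hvd
  · rintro ⟨h1, h2, h3⟩
    refine ⟨⟨h1, ?_⟩, ?_, ?_⟩
    · intro c d hs hvc hcd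
      have := h2 c d hs hcd
      omega
    · intro a b hs hab
      have := h2 a b hs hab
      omega
    · intro d hd hvd
      exact h3 ⟨d, hd, hvd⟩

lemma char2 {x v t : ℕ} {w : List ℕ} (hxv : x < v) (hx : x ∉ w) (hv : v ∉ w) :
    (Avo (x :: v :: w) ∧ BLT (x :: v :: w) t) ↔
      ((∀ d ∈ w, d < v) ∧ x < t ∧ Avo w ∧ BLT w (min t x)) := by
  rw [avo_cons, avo_cons, blt_cons, blt_cons]
  constructor
  · rintro ⟨⟨⟨h1, h2⟩, h3⟩, ⟨h4, h5⟩, h6⟩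
    refine ⟨?_, ?_, h1, ?_⟩
    · intro d hd
      have hne : d ≠ v := fun h => hv (h ▸ hd)
      have : ¬ v < d := fun hvd => h3 v d ((List.singleton_sublist.2 hd).cons₂ v) hxv hvd
      omega
    · exact h6 v (by simp) hxv
    · intro a b hs hab
      have hat : a < t := h4 a b hs hab
      have haw : a ∈ w := hs.subset (by simp)
      have hne : a ≠ x := fun h => hx (h ▸ haw)
      have : ¬ x < a := fun hxa => h3 a b (hs.cons v) hxa hab
      exact lt_min hat (by omega)
  · rintro ⟨hdv, hxt, h1, h2⟩
    refine ⟨⟨⟨h1, ?_⟩, ?_⟩, ⟨⟨?_, ?_⟩, ?_⟩⟩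
    · intro c d hs hvc hcd
      have hcw : c ∈ w := hs.subset (by simp)
      have := hdv c hcw
      omega
    · intro c d hs hxc hcd
      rw [List.sublist_cons_iff] at hs
      rcases hs with hs | ⟨r, hr, hrs⟩
      · have := h2 c d hs hcd
        omega
      · cases hr
        have := hdv d (List.singleton_sublist.1 hrs)
        omega
    · intro a b hs hab
      have := h2 a b hs hab
      omega
    · intro d hd hvd
      have := hdv d hd
      omega
    · intro d _ _
      exact hxt

lemma rank_lt_iff {S : Finset ℕ} {v : ℕ} (hv : v ∈ S) (t : ℕ) :
    v < t ↔ (S.filter (· < v)).card < (S.filter (· < t)).card := by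
  constructor
  · intro h
    apply Finset.card_lt_card
    constructor
    · intro s hs
      simp only [Finset.mem_filter] at hs ⊢
      exact ⟨hs.1, by omega⟩
    · intro hsub
      have : v ∈ S.filter (· < t) := by simp [hv, h]
      have := hsub this
      simp at this
  · intro h
    by_contra ht
    push_neg at ht
    have hsub : S.filter (· < t) ⊆ S.filter (· < v) := by
      intro s hs
      simp only [Finset.mem_filter] at hs ⊢
      exact ⟨hs.1, by omega⟩
    have := Finset.card_le_card hsub
    omega

lemma sum_rank (f : ℕ → ℕ) : ∀ (n : ℕ) (T : Finset ℕ), T.card = n →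
    (∑ v ∈ T, f ((T.filter (· < v)).card)) = ∑ j ∈ Finset.range n, f j := by
  intro n
  induction n with
  | zero =>
    intro T hT
    rw [Finset.card_eq_zero] at hT
    subst hT
    simp
  | succ n ih =>
    intro T hT
    have hne : T.Nonempty := Finset.card_pos.1 (by omega)
    set M := T.max' hne with hM
    have hMT : M ∈ T := T.max'_mem hne
    have hfM : T.filter (· < M) = T.erase M := by
      ext s
      simp only [Finset.mem_filter, Finset.mem_erase]
      constructor
      · rintro ⟨h1, h2⟩; exact ⟨by omega, h1⟩
      · rintro ⟨h1, h2⟩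
        have := T.le_max' s h2
        exact ⟨h2, by omega⟩
    have hrank : ∀ v ∈ T.erase M, (T.filter (· < v)).card = ((T.erase M).filter (· < v)).card := by
      intro v hv
      have hvT : v ∈ T := Finset.mem_of_mem_erase hv
      have hvM : v ≤ M := T.le_max' v hvT
      rw [Finset.filter_erase]
      rw [Finset.erase_eq_of_notMem]
      simp only [Finset.mem_filter]
      rintro ⟨_, h⟩
      omega
    rw [← Finset.sum_erase_add T _ hMT, hfM]
    have hcard : (T.erase M).card = n := by
      rw [Finset.card_erase_of_mem hMT]; omega
    rw [hcard]
    rw [Finset.sum_congr rfl (fun v hv => by rw [hrank v hv])]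
    rw [ih (T.erase M) hcard, Finset.sum_range_succ]

lemma sum_rank_filter (S : Finset ℕ) (t : ℕ) (f : ℕ → ℕ) :
    (∑ v ∈ S.filter (· < t), f ((S.filter (· < v)).card))
      = ∑ j ∈ Finset.range (S.filter (· < t)).card, f j := by
  have key : ∀ v ∈ S.filter (· < t), (S.filter (· < v)).card = ((S.filter (· < t)).filter (· < v)).card := by
    intro v hv
    simp only [Finset.mem_filter] at hv
    congr 1
    ext s
    simp only [Finset.mem_filter]
    constructor
    · rintro ⟨h1, h2⟩; exact ⟨⟨h1, by omega⟩, h2⟩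
    · rintro ⟨⟨h1, _⟩, h2⟩; exact ⟨h1, h2⟩
  rw [Finset.sum_congr rfl (fun v hv => by rw [key v hv])]
  exact sum_rank f _ _ rfl

lemma erase_filter_card (S : Finset ℕ) (hne : S.Nonempty) (t : ℕ) :
    ((S.erase (S.max' hne)).filter (· < t)).card
      = min (S.filter (· < t)).card (S.card - 1) := by
  set M := S.max' hne with hM
  have hMT : M ∈ S := S.max'_mem hne
  rw [Finset.filter_erase]
  by_cases hMt : M < t
  · have hall : S.filter (· < t) = S := by
      apply Finset.filter_true_of_mem
      intro s hs
      have := S.le_max' s hs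
      omega
    rw [Finset.card_erase_of_mem (by simp [hall, hMT, hMt] : M ∈ S.filter (· < t))]
    rw [hall]
    omega
  · rw [Finset.erase_eq_of_notMem (by simp only [Finset.mem_filter]; rintro ⟨_, h⟩; omega)]
    have hle : (S.filter (· < t)).card ≤ S.card - 1 := by
      have hsub : S.filter (· < t) ⊆ S.erase M := by
        intro s hs
        simp only [Finset.mem_filter] at hs
        simp only [Finset.mem_erase]
        refine ⟨fun h => ?_, hs.1⟩
        subst h; omega
      have := Finset.card_le_card hsub
      rw [Finset.card_erase_of_mem hMT] at this
      omega
    omega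

lemma sum_rank_erase (S : Finset ℕ) (hne : S.Nonempty) (t : ℕ) (f : ℕ → ℕ) :
    (∑ v ∈ (S.erase (S.max' hne)).filter (· < t), f ((S.filter (· < v)).card))
      = ∑ j ∈ Finset.range (min (S.filter (· < t)).card (S.card - 1)), f j := by
  set M := S.max' hne with hM
  have hrank : ∀ v ∈ (S.erase M).filter (· < t),
      (S.filter (· < v)).card = ((S.erase M).filter (· < v)).card := by
    intro v hv
    simp only [Finset.mem_filter, Finset.mem_erase] at hv
    have hvM : v ≤ M := S.le_max' v hv.1.2
    rw [Finset.filter_erase, Finset.erase_eq_of_notMem]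
    simp only [Finset.mem_filter]
    rintro ⟨_, h⟩
    have : v ≠ M := hv.1.1
    omega
  rw [Finset.sum_congr rfl (fun v hv => by rw [hrank v hv]), sum_rank_filter (S.erase M) t f,
    erase_filter_card S hne t]

lemma exists_pair {B : Finset ℕ} (hB : B.card = 2) : ∃ x v : ℕ, x < v ∧ B = {x, v} := by
  rw [Finset.card_eq_two] at hB
  obtain ⟨a, b, hne, rfl⟩ := hB
  rcases lt_or_gt_of_ne hne with h | h
  · exact ⟨a, b, h, rfl⟩
  · exact ⟨b, a, h, Finset.pair_comm a b⟩

lemma sort_pair {x v : ℕ} (h : x < v) : Finset.sort {x, v} (· ≤ ·) = [x, v] := by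
  have h2 : Finset.sort (insert x ({v} : Finset ℕ)) (· ≤ ·) = x :: Finset.sort {v} (· ≤ ·) :=
    Finset.sort_insert _ (fun b hb => by simp at hb; omega) (by simp; omega)
  rw [show ({x, v} : Finset ℕ) = insert x {v} from rfl, h2, Finset.sort_singleton]

lemma cnt_cons_sum (c : ℕ) (b : List ℕ) (S : Finset ℕ) (t : ℕ) :
    cnt S (c :: b) t = ∑ B ∈ S.powerset.filter (fun B => B.card = c),
      ((OSPF (S \ B) b).filter
        (fun π' => Avo (word (B :: π')) ∧ BLT (word (B :: π')) t)).card := by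
  unfold cnt
  have hrw : OSPF S (c :: b) = (S.powerset.filter fun B => B.card = c).biUnion
      (fun B => (OSPF (S \ B) b).image (B :: ·)) := by simp [OSPF]
  rw [hrw, Finset.filter_biUnion, Finset.card_biUnion ?disj]
  · refine Finset.sum_congr rfl (fun B _ => ?_)
    rw [Finset.filter_image]
    exact Finset.card_image_of_injective _ (fun a b h => by injection h)
  case disj =>
    intro B hB B' hB' hne
    rw [Function.onFun, Finset.disjoint_left]
    intro π hπ hπ'
    simp only [Finset.mem_filter, Finset.mem_image] at hπ hπ'
    obtain ⟨⟨p1, hp1, heq1⟩, _⟩ := hπ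
    obtain ⟨⟨p2, hp2, heq2⟩, _⟩ := hπ'
    rw [← heq2] at heq1
    injection heq1 with h1 h2
    exact hne h1

lemma inner1 (b : List ℕ) (hbt : ∀ x ∈ b, x = 1 ∨ x = 2)
    (ih : ∀ (S : Finset ℕ) (t : ℕ), S.card = b.sum →
      cnt S b t = F b ((S.filter (· < t)).card))
    (S : Finset ℕ) (hS : S.card = 1 + b.sum) (t : ℕ) {v : ℕ} (hv : v ∈ S) :
    ((OSPF (S \ {v}) b).filter
        (fun π' => Avo (word ({v} :: π')) ∧ BLT (word ({v} :: π')) t)).card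
      = if ((∃ d ∈ S, d ≠ v ∧ v < d) → v < t)
          then cnt (S \ {v}) b (min t v) else 0 := by
  have hcard' : (S \ {v}).card = b.sum := by
    rw [Finset.card_sdiff_of_subset (by simpa using hv)]
    simp only [Finset.card_singleton]
    omega
  have hword : ∀ π' : List (Finset ℕ), word ({v} :: π') = v :: word π' := fun π' => by
    rw [word_cons, Finset.sort_singleton]
    rfl
  have hiff : ∀ π' ∈ OSPF (S \ {v}) b,
      ((Avo (word ({v} :: π')) ∧ BLT (word ({v} :: π')) t) ↔
        ((Avo (word π') ∧ BLT (word π') (min t v)) ∧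
          ((∃ d ∈ S, d ≠ v ∧ v < d) → v < t))) := by
    intro π' hπ'
    have hmem := word_mem b (S \ {v}) π' hcard' hπ'
    have hvnot : v ∉ word π' := fun h => by
      have := (hmem v).1 h
      simp at this
    rw [hword π', char1 hvnot]
    have hd : (∃ d ∈ word π', v < d) ↔ (∃ d ∈ S, d ≠ v ∧ v < d) := by
      constructor
      · rintro ⟨d, hd, hvd⟩
        have := (hmem d).1 hd
        simp only [Finset.mem_sdiff, Finset.mem_singleton] at this
        exact ⟨d, this.1, this.2, hvd⟩
      · rintro ⟨d, hdS, hdv, hvd⟩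
        refine ⟨d, (hmem d).2 ?_, hvd⟩
        simp only [Finset.mem_sdiff, Finset.mem_singleton]
        exact ⟨hdS, hdv⟩
    rw [hd]
    tauto
  by_cases hside : (∃ d ∈ S, d ≠ v ∧ v < d) → v < t
  · rw [if_pos hside]
    unfold cnt
    congr 1
    apply Finset.filter_congr
    intro π' hπ'
    rw [hiff π' hπ']
    exact and_iff_left hside
  · rw [if_neg hside]
    rw [Finset.card_eq_zero, Finset.filter_eq_empty_iff]
    intro π' hπ' hpred
    exact hside (((hiff π' hπ').1 hpred).2)

lemma inner2 (b : List ℕ) (hbt : ∀ x ∈ b, x = 1 ∨ x = 2)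
    (S : Finset ℕ) (hS : S.card = 2 + b.sum) (t : ℕ) {x v : ℕ} (hxv : x < v)
    (hsub : ({x, v} : Finset ℕ) ⊆ S) :
    ((OSPF (S \ {x, v}) b).filter
        (fun π' => Avo (word ({x, v} :: π')) ∧ BLT (word ({x, v} :: π')) t)).card
      = if ((∀ d ∈ S \ {x, v}, d < v) ∧ x < t)
          then cnt (S \ {x, v}) b (min t x) else 0 := by
  have hcard2 : ({x, v} : Finset ℕ).card = 2 := Finset.card_pair (by omega)
  have hcard' : (S \ {x, v}).card = b.sum := by
    rw [Finset.card_sdiff_of_subset hsub, hcard2]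
    omega
  have hword : ∀ π' : List (Finset ℕ), word ({x, v} :: π') = x :: v :: word π' := fun π' => by
    rw [word_cons, sort_pair hxv]
    rfl
  have hiff : ∀ π' ∈ OSPF (S \ {x, v}) b,
      ((Avo (word ({x, v} :: π')) ∧ BLT (word ({x, v} :: π')) t) ↔
        ((Avo (word π') ∧ BLT (word π') (min t x)) ∧
          ((∀ d ∈ S \ {x, v}, d < v) ∧ x < t))) := by
    intro π' hπ'
    have hmem := word_mem b (S \ {x, v}) π' hcard' hπ'
    have hxnot : x ∉ word π' := fun h => by
      have := (hmem x).1 h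
      simp at this
    have hvnot : v ∉ word π' := fun h => by
      have := (hmem v).1 h
      simp at this
    rw [hword π', char2 hxv hxnot hvnot]
    have hd : (∀ d ∈ word π', d < v) ↔ (∀ d ∈ S \ {x, v}, d < v) := by
      constructor
      · intro h d hd
        exact h d ((hmem d).2 hd)
      · intro h d hd
        exact h d ((hmem d).1 hd)
    rw [hd]
    tauto
  by_cases hside : (∀ d ∈ S \ {x, v}, d < v) ∧ x < t
  · rw [if_pos hside]
    unfold cnt
    congr 1
    apply Finset.filter_congr
    intro π' hπ'
    rw [hiff π' hπ']
    exact and_iff_left hside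
  · rw [if_neg hside]
    rw [Finset.card_eq_zero, Finset.filter_eq_empty_iff]
    intro π' hπ' hpred
    exact hside (((hiff π' hπ').1 hpred).2)


lemma cnt_eq : ∀ (b : List ℕ), (∀ x ∈ b, x = 1 ∨ x = 2) → ∀ (S : Finset ℕ) (t : ℕ),
    S.card = b.sum → cnt S b t = F b ((S.filter (· < t)).card) := by
  intro b
  induction b with
  | nil =>
    intro _ S t hS
    have hSe : S = ∅ := Finset.card_eq_zero.1 (by simpa using hS)
    subst hSe
    unfold cnt
    have h1 : OSPF ∅ [] = {([] : List (Finset ℕ))} := by simp [OSPF]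
    rw [h1, Finset.filter_true_of_mem ?_]
    · simp [F]
    · intro π hπ
      simp only [Finset.mem_singleton] at hπ
      subst hπ
      constructor
      · intro a b c hs _ _
        rw [show word [] = [] from rfl] at hs
        simp at hs
      · intro a b hs _
        rw [show word [] = [] from rfl] at hs
        simp at hs
  | cons c b ih =>
    intro hb S t hS
    have hc := hb c (by simp)
    have hbt : ∀ x ∈ b, x = 1 ∨ x = 2 := fun x hx => hb x (by simp [hx])
    simp only [List.sum_cons] at hS
    have hSpos : 0 < S.card := by omega
    have hne : S.Nonempty := Finset.card_pos.1 hSpos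
    have hMT : S.max' hne ∈ S := S.max'_mem hne
    set M := S.max' hne with hMdef
    rw [cnt_cons_sum]
    rcases hc with hc | hc
    · -- c = 1
      subst hc
      have hpw : S.powerset.filter (fun B => B.card = 1)
          = S.image (fun v => ({v} : Finset ℕ)) := by
        ext B
        simp only [Finset.mem_filter, Finset.mem_powerset, Finset.mem_image,
          Finset.card_eq_one]
        constructor
        · rintro ⟨hsub, a, rfl⟩
          exact ⟨a, hsub (by simp), rfl⟩
        · rintro ⟨a, ha, rfl⟩
          exact ⟨by simpa using ha, a, rfl⟩
      rw [hpw, Finset.sum_image (fun a _ a' _ h => by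
        simpa using congrArg (fun (B : Finset ℕ) => a ∈ B) h)]
      rw [Finset.sum_congr rfl (fun v hv => inner1 b hbt (ih hbt) S (by omega) t hv)]
      rw [← Finset.sum_erase_add S _ hMT]
      have hMterm : (if (∃ d ∈ S, d ≠ M ∧ M < d) → M < t
            then cnt (S \ {M}) b (min t M) else 0)
          = F b (min (S.filter (· < t)).card (S.card - 1)) := by
        rw [if_pos (fun ⟨d, hd, _, hlt⟩ => absurd (S.le_max' d hd) (by omega))]
        rw [← Finset.erase_eq]
        rw [ih hbt (S.erase M) (min t M) (by rw [Finset.card_erase_of_mem hMT]; omega)]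
        congr 1
        have heq : (S.erase M).filter (· < min t M) = (S.erase M).filter (· < t) := by
          ext s
          simp only [Finset.mem_filter, Finset.mem_erase]
          constructor
          · rintro ⟨⟨h1, h2⟩, h3⟩
            exact ⟨⟨h1, h2⟩, by omega⟩
          · rintro ⟨⟨h1, h2⟩, h3⟩
            have := S.le_max' s h2
            exact ⟨⟨h1, h2⟩, by omega⟩
        rw [heq, erase_filter_card S hne t]
      have hvterm : ∀ v ∈ S.erase M,
          (if (∃ d ∈ S, d ≠ v ∧ v < d) → v < t
            then cnt (S \ {v}) b (min t v) else 0)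
          = if v < t then F b ((S.filter (· < v)).card) else 0 := by
        intro v hvE
        have hvS : v ∈ S := Finset.mem_of_mem_erase hvE
        have hvM : v < M :=
          lt_of_le_of_ne (S.le_max' v hvS) (Finset.ne_of_mem_erase hvE)
        have hex : ∃ d ∈ S, d ≠ v ∧ v < d := ⟨M, hMT, by omega, hvM⟩
        by_cases hvt : v < t
        · rw [if_pos (fun _ => hvt), if_pos hvt]
          have hmin : min t v = v := by omega
          rw [hmin, ← Finset.erase_eq]
          rw [ih hbt (S.erase v) v (by rw [Finset.card_erase_of_mem hvS]; omega)]
          congr 2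
          rw [Finset.filter_erase, Finset.erase_eq_of_notMem (by simp)]
        · rw [if_neg (fun h => hvt (h hex)), if_neg hvt]
      rw [Finset.sum_congr rfl hvterm, ← Finset.sum_filter, sum_rank_erase S hne t (F b),
        hMterm]
      show (∑ j ∈ Finset.range (min (S.filter (· < t)).card (S.card - 1)), F b j)
          + F b (min (S.filter (· < t)).card (S.card - 1)) = F (1 :: b) _
      have hm1 : S.card - 1 = b.sum + 1 - 1 := by omega
      rw [hm1]
      simp [F]
    · -- c = 2
      subst hc
      have hzero : ∀ B ∈ S.powerset.filter (fun B => B.card = 2),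
          ((OSPF (S \ B) b).filter
            (fun π' => Avo (word (B :: π')) ∧ BLT (word (B :: π')) t)).card ≠ 0 → M ∈ B := by
        intro B hB hcard0
        simp only [Finset.mem_filter, Finset.mem_powerset] at hB
        obtain ⟨x, v, hxv, rfl⟩ := exists_pair hB.2
        by_contra hM
        rw [inner2 b hbt S (by omega) t hxv hB.1] at hcard0
        apply hcard0
        rw [if_neg ?_]
        rintro ⟨hall, _⟩
        have hMBd : M ∈ S \ {x, v} := by
          simp only [Finset.mem_sdiff]
          exact ⟨hMT, hM⟩
        have hvM : v ≤ M := S.le_max' v (hB.1 (by simp))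
        have := hall M hMBd
        omega
      rw [← Finset.sum_filter_of_ne hzero]
      have hpw2 : (S.powerset.filter (fun B => B.card = 2)).filter (fun B => M ∈ B)
          = (S.erase M).image (fun x => ({x, M} : Finset ℕ)) := by
        ext B
        simp only [Finset.mem_filter, Finset.mem_powerset, Finset.mem_image,
          Finset.mem_erase]
        constructor
        · rintro ⟨⟨hsub, hcard2⟩, hMB⟩
          obtain ⟨x, v, hxv, rfl⟩ := exists_pair hcard2
          simp only [Finset.mem_insert, Finset.mem_singleton] at hMB
          rcases hMB with rfl | rfl
          · refine ⟨v, ⟨?_, hsub (by simp)⟩, ?_⟩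
            · omega
            · rw [Finset.pair_comm]
          · exact ⟨x, ⟨by omega, hsub (by simp)⟩, rfl⟩
        · rintro ⟨x, ⟨hxM, hxS⟩, rfl⟩
          refine ⟨⟨?_, Finset.card_pair hxM⟩, by simp⟩
          intro s hs
          simp only [Finset.mem_insert, Finset.mem_singleton] at hs
          rcases hs with rfl | rfl
          · exact hxS
          · exact hMT
      rw [hpw2, Finset.sum_image ?inj]
      case inj =>
        intro a ha a' ha' h
        simp only [Finset.mem_coe, Finset.mem_erase] at ha ha'
        have : a ∈ ({a', M} : Finset ℕ) := (show ({a, M} : Finset ℕ) = {a', M} from h) ▸ (by simp : a ∈ ({a, M} : Finset ℕ))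
        simp only [Finset.mem_insert, Finset.mem_singleton] at this
        rcases this with h' | h'
        · exact h'
        · exact absurd h' ha.1
      have hxterm : ∀ x ∈ S.erase M,
          ((OSPF (S \ {x, M}) b).filter
            (fun π' => Avo (word ({x, M} :: π')) ∧ BLT (word ({x, M} :: π')) t)).card
          = if x < t then F b ((S.filter (· < x)).card) else 0 := by
        intro x hxE
        have hxS : x ∈ S := Finset.mem_of_mem_erase hxE
        have hxM : x < M :=
          lt_of_le_of_ne (S.le_max' x hxS) (Finset.ne_of_mem_erase hxE)
        have hsub : ({x, M} : Finset ℕ) ⊆ S := by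
          intro s hs
          simp only [Finset.mem_insert, Finset.mem_singleton] at hs
          rcases hs with rfl | rfl
          · exact hxS
          · exact hMT
        rw [inner2 b hbt S (by omega) t hxM hsub]
        have hall : ∀ d ∈ S \ {x, M}, d < M := by
          intro d hd
          simp only [Finset.mem_sdiff, Finset.mem_insert, Finset.mem_singleton] at hd
          have := S.le_max' d hd.1
          have : d ≠ M := fun h => hd.2 (Or.inr h)
          omega
        by_cases hxt : x < t
        · rw [if_pos ⟨hall, hxt⟩]
          have hmin : min t x = x := by omega
          have hcard' : (S \ {x, M}).card = b.sum := by
            rw [Finset.card_sdiff_of_subset hsub, Finset.card_pair (by omega)]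
            omega
          rw [hmin, ih hbt (S \ {x, M}) x hcard']
          have hfe : (S \ {x, M}).filter (· < x) = S.filter (· < x) := by
            ext s
            simp only [Finset.mem_filter, Finset.mem_sdiff, Finset.mem_insert,
              Finset.mem_singleton]
            constructor
            · rintro ⟨⟨h1, _⟩, h3⟩
              exact ⟨h1, h3⟩
            · rintro ⟨h1, h3⟩
              refine ⟨⟨h1, ?_⟩, h3⟩
              rintro (rfl | rfl)
              · omega
              · omega
          rw [hfe, if_pos hxt]
        · rw [if_neg (fun hcon => hxt hcon.2), if_neg hxt]
      rw [Finset.sum_congr rfl hxterm, ← Finset.sum_filter, sum_rank_erase S hne t (F b)]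
      show (∑ j ∈ Finset.range (min (S.filter (· < t)).card (S.card - 1)), F b j)
          = F (2 :: b) _
      have hm1 : S.card - 1 = b.sum + 2 - 1 := by omega
      rw [hm1]
      simp [F]


lemma foldr_subset : ∀ (π : List (Finset ℕ)) (C : Finset ℕ), C ∈ π →
    C ⊆ π.foldr (· ∪ ·) ∅ := by
  intro π
  induction π with
  | nil => simp
  | cons B π ih =>
    intro C hC
    simp only [List.mem_cons] at hC
    rcases hC with rfl | hC
    · exact Finset.subset_union_left
    · exact (ih C hC).trans Finset.subset_union_right

lemma disjoint_foldr : ∀ (π : List (Finset ℕ)) (B : Finset ℕ),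
    (∀ C ∈ π, Disjoint B C) → Disjoint B (π.foldr (· ∪ ·) ∅) := by
  intro π
  induction π with
  | nil => simp
  | cons D π ih =>
    intro B h
    simp only [List.foldr_cons, Finset.disjoint_union_right]
    exact ⟨h D (by simp), ih B (fun C hC => h C (by simp [hC]))⟩

lemma mem_OSPF_iff : ∀ (b : List ℕ) (S : Finset ℕ) (π : List (Finset ℕ)),
    (π ∈ OSPF S b ↔ (π.map Finset.card = b ∧ π.Pairwise _root_.Disjoint ∧
      π.foldr (· ∪ ·) ∅ = S)) := by
  intro b
  induction b with
  | nil =>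
    intro S π
    rw [mem_OSPF_nil]
    constructor
    · rintro ⟨rfl, rfl⟩
      simp
    · rintro ⟨hmap, _, hfold⟩
      have : π = [] := by
        cases π with
        | nil => rfl
        | cons B π => simp at hmap
      subst this
      simp only [List.foldr_nil] at hfold
      exact ⟨hfold.symm, rfl⟩
  | cons c b ih =>
    intro S π
    rw [mem_OSPF_cons]
    constructor
    · rintro ⟨B, hBS, hBc, π', hπ', rfl⟩
      obtain ⟨hmap, hpw, hfold⟩ := (ih (S \ B) π').1 hπ'
      refine ⟨by simp [hmap, hBc], ?_, ?_⟩
      · rw [List.pairwise_cons]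
        refine ⟨fun C hC => ?_, hpw⟩
        have : C ⊆ S \ B := hfold ▸ foldr_subset π' C hC
        exact Finset.disjoint_sdiff.mono_right this
      · simp only [List.foldr_cons, hfold]
        exact Finset.union_sdiff_of_subset hBS
    · rintro ⟨hmap, hpw, hfold⟩
      cases π with
      | nil => simp at hmap
      | cons B π' =>
        simp only [List.map_cons, List.cons.injEq] at hmap
        rw [List.pairwise_cons] at hpw
        simp only [List.foldr_cons] at hfold
        have hdisj : Disjoint B (π'.foldr (· ∪ ·) ∅) :=
          disjoint_foldr π' B hpw.1
        have hU : π'.foldr (· ∪ ·) ∅ = S \ B := by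
          rw [← hfold]
          exact (Finset.union_sdiff_cancel_left hdisj).symm
        refine ⟨B, ?_, hmap.1, π', (ih (S \ B) π').2 ⟨hmap.2, hpw.2, hU⟩, rfl⟩
        rw [← hfold]
        exact Finset.subset_union_left



lemma avoids123_iff (w : List ℕ) : Avoids123 w ↔ Avo w := by
  constructor
  · intro h a b c hs hab hbc
    obtain ⟨is, his, hpw⟩ := List.sublist_eq_map_getElem hs
    match is, his, hpw with
    | [i, j, k], his, hpw =>
      simp only [List.map_cons, List.map_nil, List.cons.injEq, and_true] at his
      obtain ⟨ha, hb2, hc2⟩ := his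
      subst ha hb2 hc2
      simp only [List.pairwise_cons] at hpw
      have hij : (i : ℕ) < j := hpw.1 j (by simp)
      have hjk : (j : ℕ) < k := hpw.2.1 k (by simp)
      apply h
      refine ⟨i, j, k, hij, hjk, k.isLt, ?_, ?_⟩
      · rw [List.getD_eq_getElem w 0 (by omega : (i:ℕ) < w.length),
          List.getD_eq_getElem w 0 (by omega : (j:ℕ) < w.length)]
        exact hab
      · rw [List.getD_eq_getElem w 0 (by omega : (j:ℕ) < w.length),
          List.getD_eq_getElem w 0 (by omega : (k:ℕ) < w.length)]
        exact hbc
  · intro h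
    rintro ⟨i, j, k, hij, hjk, hk, h1, h2⟩
    have hi : i < w.length := by omega
    have hj : j < w.length := by omega
    have hpw3 : List.Pairwise (· < ·) [(⟨i, hi⟩ : Fin w.length), ⟨j, hj⟩, ⟨k, hk⟩] := by
      refine List.Pairwise.cons ?_ (List.Pairwise.cons ?_ (List.Pairwise.cons ?_ List.Pairwise.nil))
      · rintro b hb
        simp only [List.mem_cons, List.not_mem_nil, or_false] at hb
        rcases hb with rfl | rfl <;> (rw [Fin.mk_lt_mk]; omega)
      · rintro b hb
        simp only [List.mem_cons, List.not_mem_nil, or_false] at hb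
        subst hb
        rw [Fin.mk_lt_mk]; omega
      · rintro b hb
        simp at hb
    have hsub : [w[i], w[j], w[k]] <+ w := by
      simpa using List.map_getElem_sublist hpw3
    rw [List.getD_eq_getElem w 0 hi, List.getD_eq_getElem w 0 hj] at h1
    rw [List.getD_eq_getElem w 0 hj, List.getD_eq_getElem w 0 hk] at h2
    exact h w[i] w[j] w[k] hsub h1 h2

end OSP15

attribute [local instance 0] Classical.propDecidable

theorem stmt15 (b : List ℕ) (hb : ∀ x ∈ b, x = 1 ∨ x = 2) (n k : ℕ)
    (hn : n = b.sum) (hk : k = b.length) :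
    (Nat.card {π : List (Finset ℕ) // IsOSP n π ∧
        π.map Finset.card = b ∧ Avoids123 (word π)} : ℚ) =
      ((2 * k).choose k : ℚ) / (k + 1) := by
  subst hn
  subst hk
  have hIcc : (Finset.Icc 1 b.sum).card = b.sum := by rw [Nat.card_Icc]; omega
  have hpred : ∀ π : List (Finset ℕ),
      (IsOSP b.sum π ∧ π.map Finset.card = b ∧ Avoids123 (word π)) ↔
        π ∈ (OSP15.OSPF (Finset.Icc 1 b.sum) b).filter
          (fun π => OSP15.Avo (word π) ∧ OSP15.BLT (word π) (b.sum + 1)) := by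
    intro π
    rw [Finset.mem_filter]
    constructor
    · rintro ⟨⟨hne', hdisj, hfold⟩, hmap, hav⟩
      have hOS : π ∈ OSP15.OSPF (Finset.Icc 1 b.sum) b :=
        (OSP15.mem_OSPF_iff b _ π).2 ⟨hmap, hdisj, hfold⟩
      refine ⟨hOS, (OSP15.avoids123_iff _).1 hav, ?_⟩
      intro a c hs _
      have haw : a ∈ word π := hs.subset (by simp)
      have hmem : a ∈ Finset.Icc 1 b.sum :=
        (OSP15.word_mem b _ π (by rw [hIcc]) hOS a).1 haw
      simp only [Finset.mem_Icc] at hmem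
      omega
    · rintro ⟨hOS, hAvo, hblt⟩
      obtain ⟨hmap, hdisj, hfold⟩ := (OSP15.mem_OSPF_iff b _ π).1 hOS
      refine ⟨⟨?_, hdisj, hfold⟩, hmap, (OSP15.avoids123_iff _).2 hAvo⟩
      intro B hB
      have hcB : B.card ∈ b := hmap ▸ List.mem_map_of_mem (f := Finset.card) hB
      have := hb _ hcB
      rw [← Finset.card_pos]
      omega
  have hcard : Nat.card {π : List (Finset ℕ) // IsOSP b.sum π ∧
      π.map Finset.card = b ∧ Avoids123 (word π)}
      = OSP15.cnt (Finset.Icc 1 b.sum) b (b.sum + 1) := by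
    rw [Nat.card_congr (Equiv.subtypeEquivRight hpred)]
    exact Nat.card_eq_finsetCard _
  rw [hcard]
  have hcnt : OSP15.cnt (Finset.Icc 1 b.sum) b (b.sum + 1) = catalan b.length := by
    rw [OSP15.cnt_eq b hb _ _ hIcc]
    have hfe : (Finset.Icc 1 b.sum).filter (· < b.sum + 1) = Finset.Icc 1 b.sum :=
      Finset.filter_true_of_mem (fun s hs => by
        simp only [Finset.mem_Icc] at hs; omega)
    rw [hfe, hIcc, OSP15.F_sat b hb]
  rw [hcnt]
  have h1 : (b.length + 1) * catalan b.length = (2 * b.length).choose b.length := by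
    simpa [Nat.centralBinom] using succ_mul_catalan_eq_centralBinom b.length
  have h2 : catalan b.length * (b.length + 1) = (2 * b.length).choose b.length := by
    rw [mul_comm]; exact h1
  rw [eq_div_iff (by positivity : ((b.length : ℚ) + 1) ≠ 0)]
  exact_mod_cast h2
end
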